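/- arXiv:1506.03764 — 5 statements merged into one kernel-verified Lean document; each statement's English description precedes it below -/
import Mathlib

section
/- For every N ∈ ℕ with 1 ≤ N ≤ bᵐ, every m ∈ ℕ, and every k ∈ {0,…,bᵐ−1}, the number of indices n < N with Y_b(n) ∈ [k/bᵐ, (k+1)/bᵐ) equals ⌊N/bᵐ⌋ + θ with θ ∈ {0,1}. -/
open scoped Classical

/-- The b-adic radical inverse (van der Corput) function. -/
noncomputable def vdc (b n : ℕ) : ℝ :=
  ∑ j ∈ Finset.range (n + 1), ((n / b ^ j % b : ℕ) : ℝ) / (b : ℝ) ^ (j + 1)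

def srev (b : ℕ) : ℕ → ℕ → ℕ
  | 0, _ => 0
  | m + 1, n => n % b * b ^ m + srev b m (n / b)

lemma digit_unique {c x x' r r' : ℕ} (hr : r < c) (hr' : r' < c)
    (h : x * c + r = x' * c + r') : x = x' ∧ r = r' := by
  have hc : 0 < c := by omega
  have e1 : (x * c + r) / c = x := by
    rw [mul_comm, Nat.mul_add_div hc, Nat.div_eq_of_lt hr]; omega
  have e2 : (x' * c + r') / c = x' := by
    rw [mul_comm, Nat.mul_add_div hc, Nat.div_eq_of_lt hr']; omega
  have hx : x = x' := by rw [← e1, ← e2, h]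
  constructor
  · exact hx
  · subst hx; omega

lemma srev_lt (b : ℕ) (hb : 2 ≤ b) : ∀ m n, srev b m n < b ^ m := by
  intro m
  induction m with
  | zero => intro n; simp [srev]
  | succ m ih =>
      intro n
      have h1 : n % b < b := Nat.mod_lt _ (by omega)
      have h2 : srev b m (n / b) < b ^ m := ih _
      have h3 : n % b * b ^ m ≤ (b - 1) * b ^ m :=
        Nat.mul_le_mul_right _ (by omega)
      have h4 : (b - 1) * b ^ m + b ^ m = b ^ (m + 1) := by
        have hbm : b ^ m ≤ b * b ^ m := Nat.le_mul_of_pos_left _ (by omega)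
        rw [Nat.sub_mul, one_mul, pow_succ, mul_comm (b ^ m) b]
        omega
      simp only [srev]
      omega

lemma srev_inj (b : ℕ) (hb : 2 ≤ b) :
    ∀ m n n', n < b ^ m → n' < b ^ m → srev b m n = srev b m n' → n = n' := by
  intro m
  induction m with
  | zero => intro n n' h h' _; simp at h h'; omega
  | succ m ih =>
      intro n n' h h' heq
      simp only [srev] at heq
      have r1 : srev b m (n / b) < b ^ m := srev_lt b hb m _
      have r2 : srev b m (n' / b) < b ^ m := srev_lt b hb m _
      obtain ⟨hmod, hrest⟩ := digit_unique r1 r2 heq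
      have hn : n / b < b ^ m := by
        rw [Nat.div_lt_iff_lt_mul (by omega : 0 < b)]
        calc n < b ^ (m + 1) := h
        _ = b ^ m * b := pow_succ b m
      have hn' : n' / b < b ^ m := by
        rw [Nat.div_lt_iff_lt_mul (by omega : 0 < b)]
        calc n' < b ^ (m + 1) := h'
        _ = b ^ m * b := pow_succ b m
      have hdiv := ih _ _ hn hn' hrest
      have e1 := Nat.div_add_mod n b
      have e2 := Nat.div_add_mod n' b
      rw [hdiv, hmod] at e1
      omega

lemma sum_eq_srev (b : ℕ) (hb : 2 ≤ b) :
    ∀ m n, (∑ j ∈ Finset.range m, ((n / b ^ j % b : ℕ) : ℝ) / (b : ℝ) ^ (j + 1))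
      = (srev b m n : ℝ) / (b : ℝ) ^ m := by
  have hbR : (0 : ℝ) < (b : ℝ) := by positivity
  intro m
  induction m with
  | zero => intro n; simp [srev]
  | succ m ih =>
      intro n
      rw [Finset.sum_range_succ']
      have hterm : ∀ j, ((n / b ^ (j + 1) % b : ℕ) : ℝ) / (b : ℝ) ^ (j + 1 + 1)
          = (((n / b) / b ^ j % b : ℕ) : ℝ) / (b : ℝ) ^ (j + 1) / b := by
        intro j
        have hdd : n / b ^ (j + 1) = (n / b) / b ^ j := by
          rw [Nat.div_div_eq_div_mul, ← pow_succ']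
        rw [hdd, pow_succ]
        ring
      rw [Finset.sum_congr rfl (fun j _ => hterm j), ← Finset.sum_div, ih (n / b)]
      simp only [srev, pow_zero, Nat.div_one, pow_one]
      push_cast
      field_simp
      ring

lemma vdc_eq_srev (b : ℕ) (hb : 2 ≤ b) (m n : ℕ) (hn : n < b ^ m) :
    vdc b n = (srev b m n : ℝ) / (b : ℝ) ^ m := by
  have hzero : ∀ j, n + 1 ≤ j → n / b ^ j % b = 0 := by
    intro j hj
    have : n < b ^ j := by
      calc n < n + 1 := Nat.lt_succ_self n
      _ ≤ j := hj
      _ < 2 ^ j := Nat.lt_two_pow_self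
      _ ≤ b ^ j := Nat.pow_le_pow_left hb j
    simp [Nat.div_eq_of_lt this]
  have hzero' : ∀ j, m ≤ j → n / b ^ j % b = 0 := by
    intro j hj
    have : n < b ^ j := lt_of_lt_of_le hn (Nat.pow_le_pow_right (by omega) hj)
    simp [Nat.div_eq_of_lt this]
  set M := max (n + 1) m with hM
  have h1 : vdc b n = ∑ j ∈ Finset.range M,
      ((n / b ^ j % b : ℕ) : ℝ) / (b : ℝ) ^ (j + 1) := by
    unfold vdc
    apply Finset.sum_subset (Finset.range_subset_range.2 (le_max_left _ _))
    intro j _ hj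
    rw [Finset.mem_range, not_lt] at hj
    rw [hzero j hj]
    simp
  have h2 : (∑ j ∈ Finset.range m, ((n / b ^ j % b : ℕ) : ℝ) / (b : ℝ) ^ (j + 1))
      = ∑ j ∈ Finset.range M, ((n / b ^ j % b : ℕ) : ℝ) / (b : ℝ) ^ (j + 1) := by
    apply Finset.sum_subset (Finset.range_subset_range.2 (le_max_right _ _))
    intro j _ hj
    rw [Finset.mem_range, not_lt] at hj
    rw [hzero' j hj]
    simp
  rw [h1, ← h2, sum_eq_srev b hb m n]

lemma srev_surj (b : ℕ) (hb : 2 ≤ b) (m k : ℕ) (hk : k < b ^ m) :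
    ∃ n < b ^ m, srev b m n = k := by
  have himg : (Finset.range (b ^ m)).image (srev b m) = Finset.range (b ^ m) := by
    apply Finset.eq_of_subset_of_card_le
    · intro x hx
      rw [Finset.mem_image] at hx
      obtain ⟨n, _, rfl⟩ := hx
      exact Finset.mem_range.2 (srev_lt b hb m n)
    · rw [Finset.card_image_of_injOn, Finset.card_range]
      intro x hx y hy hxy
      exact srev_inj b hb m x y (Finset.mem_range.1 hx) (Finset.mem_range.1 hy) hxy
  have : k ∈ (Finset.range (b ^ m)).image (srev b m) := by
    rw [himg]; exact Finset.mem_range.2 hk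
  rw [Finset.mem_image] at this
  obtain ⟨n, hn, hsn⟩ := this
  exact ⟨n, Finset.mem_range.1 hn, hsn⟩

/-- The number of indices `n < N` with `Y_b(n)` in the elementary interval
`[k / b ^ m, (k + 1) / b ^ m)` equals `⌊N / b ^ m⌋ + θ` with `θ ∈ {0, 1}`. -/
theorem vdc_count_elementary_interval (b : ℕ) (hb : 2 ≤ b) (m : ℕ) (hm : 1 ≤ m)
    (k : ℕ) (hk : k < b ^ m) (N : ℕ) (hN1 : 1 ≤ N) (hN2 : N ≤ b ^ m) :
    ∃ θ : ℕ, θ ≤ 1 ∧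
      ((Finset.range N).filter (fun n => vdc b n ∈
          Set.Ico ((k : ℝ) / (b : ℝ) ^ m) (((k : ℝ) + 1) / (b : ℝ) ^ m))).card
        = N / b ^ m + θ := by
  have hbR : (0 : ℝ) < (b : ℝ) ^ m := by positivity
  -- the filter condition is equivalent to srev b m n = k
  have hfilter : (Finset.range N).filter (fun n => vdc b n ∈
      Set.Ico ((k : ℝ) / (b : ℝ) ^ m) (((k : ℝ) + 1) / (b : ℝ) ^ m))
      = (Finset.range N).filter (fun n => srev b m n = k) := by
    apply Finset.filter_congr
    intro n hn
    have hnb : n < b ^ m := lt_of_lt_of_le (Finset.mem_range.1 hn) hN2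
    rw [vdc_eq_srev b hb m n hnb, Set.mem_Ico]
    constructor
    · rintro ⟨h1, h2⟩
      rw [div_le_div_iff_of_pos_right hbR] at h1
      rw [div_lt_div_iff_of_pos_right hbR] at h2
      have : (k : ℝ) ≤ (srev b m n : ℝ) := h1
      have : (srev b m n : ℝ) < (k : ℝ) + 1 := h2
      have hkle : k ≤ srev b m n := by exact_mod_cast h1
      have hklt : srev b m n < k + 1 := by exact_mod_cast h2
      omega
    · intro h
      rw [h]
      constructor
      · exact le_refl _
      · apply div_lt_div_of_pos_right ?_ hbR
        norm_num
  rw [hfilter]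
  have hle1 : ((Finset.range N).filter (fun n => srev b m n = k)).card ≤ 1 := by
    apply Finset.card_le_one.2
    intro a ha c hc
    simp only [Finset.mem_filter, Finset.mem_range] at ha hc
    exact srev_inj b hb m a c (lt_of_lt_of_le ha.1 hN2) (lt_of_lt_of_le hc.1 hN2)
      (ha.2.trans hc.2.symm)
  rcases eq_or_lt_of_le hN2 with hEq | hLt
  · -- N = b^m : card = 1
    obtain ⟨n, hn, hsn⟩ := srev_surj b hb m k hk
    have hmem : n ∈ (Finset.range N).filter (fun n => srev b m n = k) := by
      simp [Finset.mem_filter, Finset.mem_range, hEq ▸ hn, hsn, hEq]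
      omega
    have h1le : 1 ≤ ((Finset.range N).filter (fun n => srev b m n = k)).card :=
      Finset.card_pos.2 ⟨n, hmem⟩
    refine ⟨0, by omega, ?_⟩
    rw [← hEq]
    have : N / N = 1 := Nat.div_self (by omega)
    omega
  · -- N < b^m : floor = 0
    refine ⟨((Finset.range N).filter (fun n => srev b m n = k)).card, hle1, ?_⟩
    rw [Nat.div_eq_of_lt hLt]
    omega
end

section
/- The s-dimensional Halton sequence in bases b₁,…,b_s is uniformly distributed modulo 1 if and only if b₁,…,b_s are pairwise coprime. -/
open scoped Classical
open Filter

private lemma vdc_nonneg (b n : ℕ) : 0 ≤ vdc b n := by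
  apply Finset.sum_nonneg; intro j _; positivity

private lemma vdc_eq_sum {b : ℕ} (hb : 2 ≤ b) {n m : ℕ} (hm : n + 1 ≤ m) :
    vdc b n = ∑ j ∈ Finset.range m, ((n / b ^ j % b : ℕ) : ℝ) / (b : ℝ) ^ (j + 1) := by
  apply Finset.sum_subset (Finset.range_subset_range.2 hm)
  intro j hj hj'
  simp only [Finset.mem_range, not_lt] at hj'
  have : n < b ^ j := lt_of_lt_of_le (Nat.lt_pow_self (n := n) hb)
    (Nat.pow_le_pow_right (by omega) (by omega))
  rw [Nat.div_eq_of_lt this]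
  simp

private lemma vdc_step {b : ℕ} (hb : 2 ≤ b) (m : ℕ) :
    vdc b m = ((m % b : ℕ) : ℝ) / b + vdc b (m / b) / b := by
  have hb0 : (0:ℝ) < b := by positivity
  rw [vdc_eq_sum hb (le_refl (m+1)), Finset.sum_range_succ']
  simp only [pow_zero, Nat.div_one, zero_add, pow_one]
  rw [add_comm]
  congr 1
  rw [vdc_eq_sum hb (show m / b + 1 ≤ m + 1 from by
    have := Nat.div_le_self m b; omega)]
  rw [Finset.sum_div, Finset.sum_range_succ]
  have hz : m / b / b ^ m = 0 := by
    apply Nat.div_eq_of_lt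
    calc m / b ≤ m := Nat.div_le_self m b
    _ < 2 ^ m := Nat.lt_two_pow_self
    _ ≤ b ^ m := Nat.pow_le_pow_left hb m
  rw [hz]
  simp only [Nat.zero_mod, Nat.cast_zero, zero_div, add_zero]
  apply Finset.sum_congr rfl
  intro j _
  rw [Nat.div_div_eq_div_mul, ← pow_succ']
  rw [div_div, ← pow_succ]

def rdig (b : ℕ) : ℕ → ℕ → ℕ
  | 0, _ => 0
  | (k+1), n => rdig b k n * b + (n / b ^ k % b)

private lemma rdig_lt {b : ℕ} (hb : 2 ≤ b) (k n : ℕ) : rdig b k n < b ^ k := by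
  induction k with
  | zero => simp [rdig]
  | succ k ih =>
    have hd : n / b ^ k % b < b := Nat.mod_lt _ (by omega)
    have : rdig b k n * b + (n / b ^ k % b) < b ^ k * b := by
      calc rdig b k n * b + (n / b ^ k % b) ≤ (b ^ k - 1) * b + (b - 1) := by
            apply Nat.add_le_add
            · exact Nat.mul_le_mul_right b (by omega)
            · omega
        _ < b ^ k * b := by
            have hbk : 1 ≤ b ^ k := Nat.one_le_pow _ _ (by omega)
            calc (b ^ k - 1) * b + (b - 1) < (b ^ k - 1) * b + b := by omega
              _ = (b ^ k - 1 + 1) * b := by ring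
              _ = b ^ k * b := by rw [Nat.sub_add_cancel hbk]
    simpa [rdig, pow_succ] using this

private lemma vdc_decomp {b : ℕ} (hb : 2 ≤ b) (k n : ℕ) :
    vdc b n = ((rdig b k n : ℝ) + vdc b (n / b ^ k)) / (b : ℝ) ^ k := by
  have hb0 : (0:ℝ) < b := by positivity
  induction k with
  | zero => simp [rdig]
  | succ k ih =>
    rw [ih, vdc_step hb (n / b ^ k)]
    rw [Nat.div_div_eq_div_mul, ← pow_succ]
    simp only [rdig]
    push_cast
    field_simp
    ring

private lemma vdc_lt_one {b : ℕ} (hb : 2 ≤ b) (n : ℕ) : vdc b n < 1 := by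
  have hb0 : (0:ℝ) < b := by positivity
  have h := vdc_decomp hb (n+1) n
  have hz : n / b ^ (n+1) = 0 := Nat.div_eq_of_lt
    (lt_of_lt_of_le (Nat.lt_pow_self (n := n) hb) (Nat.pow_le_pow_right (by omega) (by omega)))
  rw [hz] at h
  have hv0 : vdc b 0 = 0 := by simp [vdc]
  rw [hv0, add_zero] at h
  rw [h, div_lt_one (by positivity)]
  exact_mod_cast rdig_lt hb (n+1) n

private lemma vdc_mem_iff {b : ℕ} (hb : 2 ≤ b) (k n t : ℕ) :
    vdc b n ∈ Set.Ico ((t : ℝ) / (b:ℝ) ^ k) (((t : ℝ) + 1) / (b:ℝ) ^ k) ↔ rdig b k n = t := by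
  have hb0 : (0:ℝ) < (b:ℝ) ^ k := by positivity
  have h := vdc_decomp hb k n
  have h0 : 0 ≤ vdc b (n / b ^ k) := vdc_nonneg _ _
  have h1 : vdc b (n / b ^ k) < 1 := vdc_lt_one hb _
  constructor
  · rintro ⟨hl, hr⟩
    rw [h, div_le_div_iff_of_pos_right hb0] at hl
    rw [h, div_lt_div_iff_of_pos_right hb0] at hr
    have : (t:ℝ) ≤ (rdig b k n : ℝ) + vdc b (n / b^k) := hl
    have h2 : ((rdig b k n : ℝ)) < (t:ℝ) + 1 := by linarith
    have h3 : (t:ℝ) < (rdig b k n : ℝ) + 1 := by linarith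
    have : rdig b k n < t + 1 := by exact_mod_cast h2
    have : t < rdig b k n + 1 := by exact_mod_cast h3
    omega
  · rintro rfl
    constructor
    · rw [h, div_le_div_iff_of_pos_right hb0]; linarith
    · rw [h, div_lt_div_iff_of_pos_right hb0]; linarith

private lemma digit_mod {b : ℕ} (hb : 2 ≤ b) {j k : ℕ} (hj : j < k) (n : ℕ) :
    n % b ^ k / b ^ j % b = n / b ^ j % b := by
  conv_rhs => rw [← Nat.div_add_mod n (b ^ k)]
  have hd : b ^ j * b ^ (k - j) = b ^ k := by
    rw [← pow_add]; congr 1; omega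
  have h1 : (b ^ k * (n / b ^ k) + n % b ^ k) / b ^ j
      = b ^ (k - j) * (n / b ^ k) + n % b ^ k / b ^ j := by
    rw [← hd, mul_assoc, Nat.mul_add_div (pow_pos (by omega : 0 < b) j)]
  rw [h1]
  have h2 : b ∣ b ^ (k - j) := dvd_pow_self b (by omega)
  obtain ⟨e, he⟩ := h2
  rw [he, mul_assoc, Nat.mul_add_mod]

private lemma rdig_congr {b : ℕ} {k : ℕ} {n m : ℕ}
    (h : ∀ j < k, n / b ^ j % b = m / b ^ j % b) : rdig b k n = rdig b k m := by
  induction k with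
  | zero => rfl
  | succ k ih =>
    simp only [rdig]
    rw [ih (fun j hj => h j (by omega)), h k (by omega)]

private lemma rdig_mod {b : ℕ} (hb : 2 ≤ b) (k n : ℕ) : rdig b k (n % b ^ k) = rdig b k n :=
  rdig_congr (fun j hj => digit_mod hb hj n)

private lemma rdig_inj {b : ℕ} (hb : 2 ≤ b) (k : ℕ) : ∀ n m : ℕ,
    rdig b k n = rdig b k m → n % b ^ k = m % b ^ k := by
  induction k with
  | zero => intro n m _; rw [pow_zero, Nat.mod_one, Nat.mod_one]
  | succ k ih =>
    intro n m h
    simp only [rdig] at h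
    have hb0 : 0 < b := by omega
    have hd1 : n / b ^ k % b < b := Nat.mod_lt _ hb0
    have hd2 : m / b ^ k % b < b := Nat.mod_lt _ hb0
    have h1 : rdig b k n = rdig b k m := by
      have e1 : (rdig b k n * b + n / b ^ k % b) / b = rdig b k n := by
        rw [mul_comm, Nat.mul_add_div hb0, Nat.div_eq_of_lt hd1, add_zero]
      have e2 : (rdig b k m * b + m / b ^ k % b) / b = rdig b k m := by
        rw [mul_comm, Nat.mul_add_div hb0, Nat.div_eq_of_lt hd2, add_zero]
      rw [← e1, ← e2, h]
    have h2 : n / b ^ k % b = m / b ^ k % b := by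
      rw [h1] at h; exact Nat.add_left_cancel h
    have h3 : n % b ^ k = m % b ^ k := ih n m h1
    have e1 : n % b ^ (k+1) = b ^ k * (n / b ^ k % b) + n % b ^ k := by
      conv_lhs => rw [← Nat.div_add_mod (n % b ^ (k+1)) (b ^ k)]
      rw [Nat.mod_mod_of_dvd _ (pow_dvd_pow b (by omega)), pow_succ,
        Nat.mod_mul_right_div_self]
    have e2 : m % b ^ (k+1) = b ^ k * (m / b ^ k % b) + m % b ^ k := by
      conv_lhs => rw [← Nat.div_add_mod (m % b ^ (k+1)) (b ^ k)]
      rw [Nat.mod_mod_of_dvd _ (pow_dvd_pow b (by omega)), pow_succ,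
        Nat.mod_mul_right_div_self]
    rw [e1, e2, h2, h3]

private lemma rdig_surj {b : ℕ} (hb : 2 ≤ b) (k : ℕ) {t : ℕ} (ht : t < b ^ k) :
    ∃ r, r < b ^ k ∧ rdig b k r = t := by
  have := Finset.surj_on_of_inj_on_of_card_le
    (s := Finset.range (b ^ k)) (t := Finset.range (b ^ k))
    (fun n _ => rdig b k n)
    (fun n _ => Finset.mem_range.2 (rdig_lt hb k n))
    (fun n m hn hm h => by
      have := rdig_inj hb k n m h
      rwa [Nat.mod_eq_of_lt (Finset.mem_range.1 hn),
        Nat.mod_eq_of_lt (Finset.mem_range.1 hm)] at this)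
    le_rfl t (Finset.mem_range.2 ht)
  obtain ⟨r, hr, hrt⟩ := this
  exact ⟨r, Finset.mem_range.1 hr, hrt.symm⟩

private lemma count_mod_card {M : ℕ} (hM : 0 < M) {R : ℕ} (hR : R < M) (N : ℕ) :
    ((Finset.range N).filter (fun n => n % M = R)).card = (N + (M - 1 - R)) / M := by
  induction N with
  | zero => simp [Nat.div_eq_of_lt (show M - 1 - R < M by omega)]
  | succ N ih =>
    rw [Finset.range_add_one, Finset.filter_insert]
    have key : N % M = R ↔ M ∣ N + (M - 1 - R) + 1 := by
      constructor
      · intro h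
        refine ⟨N / M + 1, ?_⟩
        have h2 := Nat.div_add_mod N M
        rw [h] at h2
        rw [Nat.mul_add, Nat.mul_one]
        omega
      · rintro ⟨q, hq⟩
        match q, hq with
        | (q' + 1), hq => ?_
        rw [Nat.mul_add, Nat.mul_one] at hq
        have hN : N = M * q' + R := by omega
        rw [hN, Nat.mul_add_mod]
        exact Nat.mod_eq_of_lt hR
    have harith : (N + 1 + (M - 1 - R)) / M = (N + (M - 1 - R)) / M
        + if M ∣ N + (M - 1 - R) + 1 then 1 else 0 := by
      have : N + 1 + (M - 1 - R) = N + (M - 1 - R) + 1 := by omega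
      rw [this, Nat.succ_div]
    by_cases h : N % M = R
    · rw [if_pos h, Finset.card_insert_of_notMem (by simp), ih, harith,
        if_pos (key.1 h)]
    · rw [if_neg h, ih, harith, if_neg (fun hd => h (key.2 hd))]
      omega

private lemma tendsto_count_mod {M : ℕ} (hM : 0 < M) {R : ℕ} (hR : R < M) :
    Tendsto (fun N : ℕ => (((Finset.range N).filter (fun n => n % M = R)).card : ℝ) / N)
      atTop (nhds (1 / M)) := by
  have hM' : (0:ℝ) < M := by exact_mod_cast hM
  apply tendsto_of_tendsto_of_tendsto_of_le_of_le'
    (g := fun N : ℕ => 1 / (M:ℝ) - 1 / N) (h := fun N : ℕ => 1 / (M:ℝ) + 1 / N + 1 / N)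
  · have : Tendsto (fun N : ℕ => 1 / (N:ℝ)) atTop (nhds 0) :=
      tendsto_one_div_atTop_nhds_zero_nat
    have := (tendsto_const_nhds (x := 1 / (M:ℝ)) (f := atTop)).sub this
    simpa using this
  · have h0 : Tendsto (fun N : ℕ => 1 / (N:ℝ)) atTop (nhds 0) :=
      tendsto_one_div_atTop_nhds_zero_nat
    have := ((tendsto_const_nhds (x := 1 / (M:ℝ)) (f := atTop)).add h0).add h0
    simpa using this
  · -- lower bound, eventually
    filter_upwards [eventually_ge_atTop 1] with N hN
    have hN' : (0:ℝ) < N := by exact_mod_cast hN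
    rw [count_mod_card hM hR N]
    set D := M - 1 - R with hD
    have hx1 : (N:ℝ)/M - 1 ≤ (((N + D) / M : ℕ) : ℝ) := by
      have h2n : N + D < ((N + D) / M + 1) * M := by
        rw [add_mul, one_mul, mul_comm]
        have h3 := Nat.div_add_mod (N + D) M
        have h4 := Nat.mod_lt (N + D) hM
        omega
      have h2 : ((N + D : ℕ) : ℝ) < ((((N + D) / M : ℕ) : ℝ) + 1) * M := by
        exact_mod_cast h2n
      have hD0 : (0:ℝ) ≤ (D:ℕ) := Nat.cast_nonneg D
      push_cast at h2
      rw [div_sub_one (ne_of_gt hM'), div_le_iff₀ hM']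
      nlinarith
    calc 1/(M:ℝ) - 1/N = ((N:ℝ)/M - 1)/N := by field_simp
      _ ≤ (((N + D) / M : ℕ) : ℝ) / N := by gcongr
  · filter_upwards [eventually_ge_atTop 1] with N hN
    have hN' : (0:ℝ) < N := by exact_mod_cast hN
    rw [count_mod_card hM hR N]
    set D := M - 1 - R with hD
    have hx2 : (((N + D) / M : ℕ) : ℝ) ≤ (N:ℝ)/M + 1 := by
      have h2 : (((N + D) / M : ℕ) : ℝ) ≤ ((N + D : ℕ) : ℝ) / M := Nat.cast_div_le
      have hDM : ((D:ℕ):ℝ) ≤ M := by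
        have : D ≤ M := by omega
        exact_mod_cast this
      push_cast at h2
      calc (((N + D) / M : ℕ) : ℝ) ≤ ((N:ℝ) + D) / M := h2
        _ ≤ ((N:ℝ) + M) / M := by gcongr
        _ = (N:ℝ)/M + 1 := by field_simp
    calc (((N + D) / M : ℕ) : ℝ) / N ≤ ((N:ℝ)/M + 1)/N := by gcongr
      _ = 1/M + 1/N := by field_simp
      _ ≤ 1/(M:ℝ) + 1/N + 1/N := by
          have h5 : (0:ℝ) ≤ 1/N := by positivity
          linarith

private lemma prod_dvd_int {s : ℕ} (M : Fin s → ℕ)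
    (hcop : ∀ i j, i ≠ j → Nat.Coprime (M i) (M j)) {z : ℤ}
    (h : ∀ i, (M i : ℤ) ∣ z) : ((∏ i, M i : ℕ) : ℤ) ∣ z := by
  push_cast
  exact Finset.prod_dvd_of_coprime
    (fun i _ j _ hij => Nat.isCoprime_iff_coprime.2 (hcop i j hij))
    (fun i _ => h i)

private lemma forall_mod_iff {s : ℕ} (M : Fin s → ℕ)
    (hcop : ∀ i j, i ≠ j → Nat.Coprime (M i) (M j)) (n R : ℕ) :
    (∀ i, n % M i = R % M i) ↔ n % (∏ i, M i) = R % (∏ i, M i) := by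
  constructor
  · intro h
    have hd : ∀ i, (M i : ℤ) ∣ (R : ℤ) - n := fun i => Nat.modEq_iff_dvd.1 (h i)
    exact Nat.modEq_iff_dvd.2 (prod_dvd_int M hcop hd)
  · intro h i
    exact Nat.ModEq.of_dvd (Finset.dvd_prod_of_mem M (Finset.mem_univ i)) h

private lemma crt_exists {s : ℕ} (M : Fin s → ℕ) (hM : ∀ i, 0 < M i)
    (hcop : ∀ i j, i ≠ j → Nat.Coprime (M i) (M j)) (r : Fin s → ℕ)
    (hr : ∀ i, r i < M i) :
    ∃ R, R < ∏ i, M i ∧ ∀ i, R % M i = r i := by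
  classical
  have hsurj := Finset.surj_on_of_inj_on_of_card_le
    (s := Finset.range (∏ i, M i)) (t := Fintype.piFinset (fun i => Finset.range (M i)))
    (fun n _ => fun i => n % M i)
    (fun n _ => by
      simp only [Fintype.mem_piFinset, Finset.mem_range]
      exact fun i => Nat.mod_lt _ (hM i))
    (fun n m hn hm h => by
      have h2 : ∀ i, n % M i = m % M i := fun i => congrFun h i
      have h3 := (forall_mod_iff M hcop n m).1 h2
      rwa [Nat.mod_eq_of_lt (Finset.mem_range.1 hn),
        Nat.mod_eq_of_lt (Finset.mem_range.1 hm)] at h3)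
    (by
      rw [Fintype.card_piFinset]
      simp)
    r
    (by
      simp only [Fintype.mem_piFinset, Finset.mem_range]
      exact hr)
  obtain ⟨R, hR, hRr⟩ := hsurj
  exact ⟨R, Finset.mem_range.1 hR, fun i => (congrFun hRr i).symm⟩

private lemma rdig_eq_iff {b : ℕ} (hb : 2 ≤ b) {k r t : ℕ} (hrk : r < b ^ k)
    (hrt : rdig b k r = t) (n : ℕ) : rdig b k n = t ↔ n % b ^ k = r := by
  constructor
  · intro h
    have := rdig_inj hb k n r (by rw [h, hrt])
    rwa [Nat.mod_eq_of_lt hrk] at this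
  · intro h
    rw [← rdig_mod hb k n, h, hrt]

private lemma tendsto_tuple {s : ℕ} (b : Fin s → ℕ) (hb : ∀ i, 2 ≤ b i)
    (hcop : ∀ i j, i ≠ j → Nat.Coprime (b i) (b j)) (k : ℕ) (t : Fin s → ℕ)
    (ht : ∀ i, t i < b i ^ k) :
    Tendsto (fun N : ℕ =>
        (((Finset.range N).filter (fun n => ∀ i, rdig (b i) k n = t i)).card : ℝ) / N)
      atTop (nhds (1 / ∏ i, ((b i : ℝ) ^ k))) := by
  set M : Fin s → ℕ := fun i => b i ^ k with hM
  have hM0 : ∀ i, 0 < M i := fun i => pow_pos (by have := hb i; omega : 0 < b i) k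
  have hMcop : ∀ i j, i ≠ j → Nat.Coprime (M i) (M j) := by
    intro i j hij
    exact Nat.Coprime.pow k k (hcop i j hij)
  -- choose residues
  have hch : ∀ i, ∃ r, r < M i ∧ rdig (b i) k r = t i := fun i => rdig_surj (hb i) k (ht i)
  choose r hrlt hrt using hch
  obtain ⟨R, hRlt, hRr⟩ := crt_exists M hM0 hMcop r hrlt
  have hProd0 : 0 < ∏ i, M i := Finset.prod_pos (fun i _ => hM0 i)
  have key : ∀ n, (∀ i, rdig (b i) k n = t i) ↔ n % (∏ i, M i) = R := by
    intro n
    have h1 : (∀ i, rdig (b i) k n = t i) ↔ ∀ i, n % M i = r i := by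
      exact forall_congr' (fun i => rdig_eq_iff (hb i) (hrlt i) (hrt i) n)
    rw [h1]
    have h2 : (∀ i, n % M i = r i) ↔ ∀ i, n % M i = R % M i := by
      exact forall_congr' (fun i => by rw [hRr i])
    rw [h2, forall_mod_iff M hMcop n R, Nat.mod_eq_of_lt hRlt]
  have hc := tendsto_count_mod hProd0 hRlt
  have heq : ∀ N : ℕ, ((Finset.range N).filter (fun n => ∀ i, rdig (b i) k n = t i)).card
      = ((Finset.range N).filter (fun n => n % (∏ i, M i) = R)).card := by
    intro N
    congr 1
    apply Finset.filter_congr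
    intro n _
    simp only [key n]
  have hcast : ((∏ i, M i : ℕ) : ℝ) = ∏ i, ((b i : ℝ) ^ k) := by
    push_cast [hM]
    rfl
  rw [← hcast]
  simpa only [heq] using hc

private lemma prod_sub_prod_le_sum {ι : Type*} (t : Finset ι) (x y : ι → ℝ)
    (h0 : ∀ i ∈ t, 0 ≤ x i) (hxy : ∀ i ∈ t, x i ≤ y i) (hy1 : ∀ i ∈ t, y i ≤ 1) :
    ∏ i ∈ t, y i - ∏ i ∈ t, x i ≤ ∑ i ∈ t, (y i - x i) := by
  classical
  induction t using Finset.induction_on with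
  | empty => simp
  | insert _ _ hat ih =>
    rename_i a t'
    rw [Finset.prod_insert hat, Finset.prod_insert hat, Finset.sum_insert hat]
    have h0' : ∀ i ∈ t', 0 ≤ x i := fun i hi => h0 i (Finset.mem_insert_of_mem hi)
    have hxy' : ∀ i ∈ t', x i ≤ y i := fun i hi => hxy i (Finset.mem_insert_of_mem hi)
    have hy1' : ∀ i ∈ t', y i ≤ 1 := fun i hi => hy1 i (Finset.mem_insert_of_mem hi)
    have ihh := ih h0' hxy' hy1'
    have hPx0 : 0 ≤ ∏ i ∈ t', x i := Finset.prod_nonneg h0'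
    have hPx1 : ∏ i ∈ t', x i ≤ 1 :=
      Finset.prod_le_one h0' (fun i hi => le_trans (hxy' i hi) (hy1' i hi))
    have hPyx : ∏ i ∈ t', x i ≤ ∏ i ∈ t', y i := Finset.prod_le_prod h0' hxy'
    have ha0 : 0 ≤ x a := h0 a (Finset.mem_insert_self a t')
    have haxy : x a ≤ y a := hxy a (Finset.mem_insert_self a t')
    have hay1 : y a ≤ 1 := hy1 a (Finset.mem_insert_self a t')
    have key : y a * ∏ i ∈ t', y i - x a * ∏ i ∈ t', x i
        = y a * (∏ i ∈ t', y i - ∏ i ∈ t', x i) + (y a - x a) * ∏ i ∈ t', x i := by ring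
    rw [key]
    have h1 : y a * (∏ i ∈ t', y i - ∏ i ∈ t', x i) ≤ ∏ i ∈ t', y i - ∏ i ∈ t', x i := by
      nlinarith
    have h2 : (y a - x a) * ∏ i ∈ t', x i ≤ y a - x a := by nlinarith
    linarith


private lemma cast_sub_ge (m n : ℕ) : (m:ℝ) - n ≤ ((m - n : ℕ) : ℝ) := by
  rcases le_total n m with h | h
  · rw [Nat.cast_sub h]
  · have h1 : m - n = 0 := by omega
    rw [h1, Nat.cast_zero]
    have : (m:ℝ) ≤ n := by exact_mod_cast h
    linarith

private lemma cast_sub_le' {m n : ℕ} {B : ℝ} (h : (m:ℝ) - n ≤ B) (hB : 0 ≤ B) :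
    ((m - n : ℕ) : ℝ) ≤ B := by
  rcases le_total n m with h' | h'
  · rwa [Nat.cast_sub h']
  · have h1 : m - n = 0 := by omega
    rw [h1, Nat.cast_zero]; exact hB

private lemma div_cast_mono {c1 c2 N : ℕ} (h : c1 ≤ c2) : (c1:ℝ)/N ≤ (c2:ℝ)/N := by
  rcases Nat.eq_zero_or_pos N with rfl | hN
  · simp
  · have hN' : (0:ℝ) < N := by exact_mod_cast hN
    have h2 : (c1:ℝ) ≤ c2 := by exact_mod_cast h
    gcongr

private lemma bracket {s : ℕ} (b : Fin s → ℕ) (hb : ∀ i, 2 ≤ b i)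
    (hcop : ∀ i j, i ≠ j → Nat.Coprime (b i) (b j))
    (a c : Fin s → ℝ) (hac : ∀ i, 0 ≤ a i ∧ a i < c i ∧ c i ≤ 1) (k : ℕ) :
    ∃ L U : ℝ, ∃ g h : ℕ → ℝ,
      Tendsto g atTop (nhds L) ∧ Tendsto h atTop (nhds U) ∧
      (∀ N : ℕ, g N ≤ (((Finset.range N).filter
          (fun n => ∀ i, vdc (b i) n ∈ Set.Ico (a i) (c i))).card : ℝ) / N ∧
        (((Finset.range N).filter
          (fun n => ∀ i, vdc (b i) n ∈ Set.Ico (a i) (c i))).card : ℝ) / N ≤ h N) ∧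
      L ≤ ∏ i, (c i - a i) ∧ (∏ i, (c i - a i)) ≤ U ∧ U - L ≤ (s:ℝ) * (4 / 2 ^ k) := by
  classical
  set M : Fin s → ℕ := fun i => b i ^ k with hMdef
  set Mr : Fin s → ℝ := fun i => ((b i : ℝ)) ^ k with hMrdef
  have hMr_cast : ∀ i, ((M i : ℕ) : ℝ) = Mr i := by
    intro i; rw [hMdef, hMrdef]; push_cast; ring
  have hb_pos : ∀ i, (0:ℝ) < (b i : ℝ) := fun i => by
    have := hb i; exact_mod_cast (by omega : 0 < b i)
  have hMr_pos : ∀ i, 0 < Mr i := fun i => by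
    rw [hMrdef]; exact pow_pos (hb_pos i) k
  have hM_pos : ∀ i, 0 < M i := fun i => pow_pos (by have := hb i; omega : 0 < b i) k
  have hMr_ge : ∀ i, (2:ℝ) ^ k ≤ Mr i := fun i => by
    rw [hMrdef]
    apply pow_le_pow_left₀ (by norm_num)
    exact_mod_cast hb i
  have hca_pos : ∀ i, 0 < c i - a i := fun i => by have := (hac i).2.1; linarith
  set Sm : Fin s → Finset ℕ := fun i => Finset.Ico ⌈a i * Mr i⌉₊ ⌊c i * Mr i⌋₊ with hSm
  set Sp : Fin s → Finset ℕ :=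
    fun i => Finset.Ico ⌊a i * Mr i⌋₊ (min (M i) ⌈c i * Mr i⌉₊) with hSp
  have hfloor_le_M : ∀ i, ⌊c i * Mr i⌋₊ ≤ M i := by
    intro i
    have hc1 : c i * Mr i ≤ Mr i := by
      have := (hac i).2.2; nlinarith [hMr_pos i]
    calc ⌊c i * Mr i⌋₊ ≤ ⌊Mr i⌋₊ := Nat.floor_le_floor hc1
      _ = M i := by rw [← hMr_cast i, Nat.floor_natCast]
  have hSm_lt : ∀ i, ∀ t ∈ Sm i, t < M i := by
    intro i t ht
    rw [hSm, Finset.mem_Ico] at ht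
    have := hfloor_le_M i
    omega
  have hSp_lt : ∀ i, ∀ t ∈ Sp i, t < M i := by
    intro i t ht
    rw [hSp, Finset.mem_Ico] at ht
    omega
  -- pointwise implications
  have hvdc_mem : ∀ i n, vdc (b i) n ∈ Set.Ico ((rdig (b i) k n : ℝ) / Mr i)
      (((rdig (b i) k n : ℝ) + 1) / Mr i) := by
    intro i n
    rw [hMrdef]
    exact (vdc_mem_iff (hb i) k n (rdig (b i) k n)).2 rfl
  have himp1 : ∀ n, (∀ i, rdig (b i) k n ∈ Sm i) →
      ∀ i, vdc (b i) n ∈ Set.Ico (a i) (c i) := by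
    intro n hn i
    have ht := hn i
    rw [hSm, Finset.mem_Ico] at ht
    obtain ⟨hl, hr⟩ := hvdc_mem i n
    constructor
    · have h1 : a i * Mr i ≤ (rdig (b i) k n : ℝ) := by
        calc a i * Mr i ≤ (⌈a i * Mr i⌉₊ : ℝ) := Nat.le_ceil _
          _ ≤ (rdig (b i) k n : ℝ) := by exact_mod_cast ht.1
      have h2 : a i ≤ (rdig (b i) k n : ℝ) / Mr i := (le_div_iff₀ (hMr_pos i)).2 h1
      linarith
    · have h1 : ((rdig (b i) k n : ℝ) + 1) ≤ c i * Mr i := by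
        have h3 : (rdig (b i) k n : ℝ) + 1 ≤ (⌊c i * Mr i⌋₊ : ℝ) := by
          exact_mod_cast (by omega : rdig (b i) k n + 1 ≤ ⌊c i * Mr i⌋₊)
        calc (rdig (b i) k n : ℝ) + 1 ≤ (⌊c i * Mr i⌋₊ : ℝ) := h3
          _ ≤ c i * Mr i := Nat.floor_le (by nlinarith [hca_pos i, (hac i).1, hMr_pos i])
      have h2 : ((rdig (b i) k n : ℝ) + 1) / Mr i ≤ c i := by
        rw [div_le_iff₀ (hMr_pos i)]; linarith
      linarith
  have himp2 : ∀ n, (∀ i, vdc (b i) n ∈ Set.Ico (a i) (c i)) →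
      ∀ i, rdig (b i) k n ∈ Sp i := by
    intro n hn i
    obtain ⟨ha1, hc1⟩ := hn i
    obtain ⟨hl, hr⟩ := hvdc_mem i n
    rw [hSp, Finset.mem_Ico]
    constructor
    · -- ⌊a i * Mr i⌋₊ ≤ rdig
      have h1 : a i * Mr i < (rdig (b i) k n : ℝ) + 1 := by
        have : a i < ((rdig (b i) k n : ℝ) + 1) / Mr i := lt_of_le_of_lt ha1 hr
        rw [lt_div_iff₀ (hMr_pos i)] at this
        linarith
      have h2 : (⌊a i * Mr i⌋₊ : ℝ) < (rdig (b i) k n : ℝ) + 1 :=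
        lt_of_le_of_lt (Nat.floor_le (by nlinarith [(hac i).1, hMr_pos i])) h1
      have h3 : ⌊a i * Mr i⌋₊ < rdig (b i) k n + 1 := by exact_mod_cast h2
      omega
    · rw [lt_min_iff]
      refine ⟨rdig_lt (hb i) k n, ?_⟩
      rw [Nat.lt_ceil]
      have h1 : (rdig (b i) k n : ℝ) / Mr i < c i := lt_of_le_of_lt hl hc1
      rw [div_lt_iff₀ (hMr_pos i)] at h1
      linarith
  -- fiberwise count
  have hfiber : ∀ (S : Fin s → Finset ℕ), (∀ i, ∀ t ∈ S i, t < M i) → ∀ N : ℕ,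
      ((Finset.range N).filter (fun n => ∀ i, rdig (b i) k n ∈ S i)).card
      = ∑ t ∈ Fintype.piFinset S,
          ((Finset.range N).filter (fun n => ∀ i, rdig (b i) k n = t i)).card := by
    intro S hlt N
    rw [Finset.card_eq_sum_card_fiberwise (f := fun n (i : Fin s) => rdig (b i) k n)
      (t := Fintype.piFinset S)
      (fun n hn => by
        rw [Finset.mem_coe, Fintype.mem_piFinset]
        exact (Finset.mem_filter.1 (Finset.mem_coe.1 hn)).2)]
    apply Finset.sum_congr rfl
    intro t ht
    congr 1
    ext n
    simp only [Finset.mem_filter, Finset.mem_range, funext_iff]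
    constructor
    · rintro ⟨⟨h1, _⟩, h3⟩
      exact ⟨h1, h3⟩
    · rintro ⟨h1, h2⟩
      refine ⟨⟨h1, fun i => ?_⟩, h2⟩
      rw [h2 i]
      exact Fintype.mem_piFinset.1 ht i
  -- the tendsto of the bracketing counts
  have htend : ∀ (S : Fin s → Finset ℕ), (∀ i, ∀ t ∈ S i, t < M i) →
      Tendsto (fun N : ℕ => (((Finset.range N).filter
          (fun n => ∀ i, rdig (b i) k n ∈ S i)).card : ℝ) / N) atTop
        (nhds (∏ i, (((S i).card : ℝ) / Mr i))) := by
    intro S hlt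
    have h1 : ∀ N : ℕ, (((Finset.range N).filter
        (fun n => ∀ i, rdig (b i) k n ∈ S i)).card : ℝ) / N
        = ∑ t ∈ Fintype.piFinset S,
            (((Finset.range N).filter (fun n => ∀ i, rdig (b i) k n = t i)).card : ℝ) / N := by
      intro N
      rw [hfiber S hlt N]
      push_cast
      rw [Finset.sum_div]
    simp only [h1]
    have h2 := tendsto_finset_sum (f := fun (t : Fin s → ℕ) (N : ℕ) =>
        (((Finset.range N).filter (fun n => ∀ i, rdig (b i) k n = t i)).card : ℝ) / N)
      (a := fun _ => 1 / ∏ i, ((b i : ℝ) ^ k)) (Fintype.piFinset S)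
      (fun t ht => tendsto_tuple b hb hcop k t
        (fun i => hlt i (t i) (Fintype.mem_piFinset.1 ht i)))
    have h3 : ∑ _t ∈ Fintype.piFinset S, (1 / ∏ i, ((b i : ℝ) ^ k))
        = ∏ i, (((S i).card : ℝ) / Mr i) := by
      rw [Finset.sum_const, nsmul_eq_mul, Fintype.card_piFinset]
      rw [Finset.prod_div_distrib]
      have : ((∏ i, (S i).card : ℕ) : ℝ) = ∏ i, ((S i).card : ℝ) := by push_cast; ring
      rw [this]
      have hMrprod : ∏ i, Mr i = ∏ i, ((b i : ℝ) ^ k) := by rw [hMrdef]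
      rw [hMrprod]
      ring
    rw [h3] at h2
    exact h2
  refine ⟨∏ i, (((Sm i).card : ℝ) / Mr i), ∏ i, (((Sp i).card : ℝ) / Mr i),
    _, _, htend Sm hSm_lt, htend Sp hSp_lt, ?_, ?_, ?_, ?_⟩
  · -- sandwich for every N
    intro N
    constructor
    · apply div_cast_mono
      apply Finset.card_le_card
      exact Finset.monotone_filter_right _ (fun n _ => himp1 n)
    · apply div_cast_mono
      apply Finset.card_le_card
      exact Finset.monotone_filter_right _ (fun n _ => himp2 n)
  · -- L ≤ ∏ (c - a)
    apply Finset.prod_le_prod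
    · intro i _; positivity
    · intro i _
      rw [hSm, Nat.card_Ico, div_le_iff₀ (hMr_pos i)]
      apply cast_sub_le'
      · have h1 : (⌊c i * Mr i⌋₊ : ℝ) ≤ c i * Mr i :=
          Nat.floor_le (by nlinarith [hca_pos i, (hac i).1, hMr_pos i])
        have h2 : a i * Mr i ≤ (⌈a i * Mr i⌉₊ : ℝ) := Nat.le_ceil _
        nlinarith
      · nlinarith [hca_pos i, hMr_pos i]
  · -- ∏ (c - a) ≤ U
    apply Finset.prod_le_prod
    · intro i _
      exact le_of_lt (hca_pos i)
    · intro i _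
      rw [hSp, Nat.card_Ico, le_div_iff₀ (hMr_pos i)]
      refine le_trans ?_ (cast_sub_ge _ _)
      have h1 : (min (M i) ⌈c i * Mr i⌉₊ : ℕ) = min (M i) ⌈c i * Mr i⌉₊ := rfl
      have h2 : ((min (M i) ⌈c i * Mr i⌉₊ : ℕ) : ℝ) = min ((M i : ℕ) : ℝ) ((⌈c i * Mr i⌉₊ : ℕ) : ℝ) := by
        push_cast
        rfl
      rw [h2, hMr_cast i]
      have h3 : c i * Mr i ≤ min (Mr i) ((⌈c i * Mr i⌉₊ : ℕ) : ℝ) := by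
        rw [le_min_iff]
        constructor
        · have := (hac i).2.2; nlinarith [hMr_pos i]
        · exact Nat.le_ceil _
      have h4 : (⌊a i * Mr i⌋₊ : ℝ) ≤ a i * Mr i :=
        Nat.floor_le (by nlinarith [(hac i).1, hMr_pos i])
      nlinarith
  · -- U - L ≤ s * (4 / 2^k)
    have hxm0 : ∀ i ∈ Finset.univ (α := Fin s), 0 ≤ ((Sm i).card : ℝ) / Mr i := by
      intro i _; positivity
    have hxmxp : ∀ i ∈ Finset.univ (α := Fin s),
        ((Sm i).card : ℝ) / Mr i ≤ ((Sp i).card : ℝ) / Mr i := by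
      intro i _
      have hsub : Sm i ⊆ Sp i := by
        rw [hSm, hSp]
        apply Finset.Ico_subset_Ico
        · exact Nat.floor_le_ceil _
        · rw [le_min_iff]
          exact ⟨hfloor_le_M i, Nat.floor_le_ceil _⟩
      rw [div_le_div_iff_of_pos_right (hMr_pos i)]
      exact_mod_cast Finset.card_le_card hsub
    have hxp1 : ∀ i ∈ Finset.univ (α := Fin s), ((Sp i).card : ℝ) / Mr i ≤ 1 := by
      intro i _
      rw [div_le_one (hMr_pos i), ← hMr_cast i]
      have : Sp i ⊆ Finset.range (M i) := by
        intro t ht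
        rw [Finset.mem_range]
        exact hSp_lt i t ht
      have h6 := Finset.card_le_card this
      rw [Finset.card_range] at h6
      exact_mod_cast h6
    have hmain := prod_sub_prod_le_sum Finset.univ
      (fun i => ((Sm i).card : ℝ) / Mr i) (fun i => ((Sp i).card : ℝ) / Mr i)
      hxm0 hxmxp hxp1
    refine le_trans hmain ?_
    have hterm : ∀ i ∈ Finset.univ (α := Fin s),
        ((Sp i).card : ℝ) / Mr i - ((Sm i).card : ℝ) / Mr i ≤ 4 / 2 ^ k := by
      intro i _
      have hup : ((Sp i).card : ℝ) ≤ (c i - a i) * Mr i + 2 := by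
        rw [hSp, Nat.card_Ico]
        apply cast_sub_le'
        · have h2 : ((min (M i) ⌈c i * Mr i⌉₊ : ℕ) : ℝ) ≤ ((⌈c i * Mr i⌉₊ : ℕ) : ℝ) := by
            exact_mod_cast min_le_right _ _
          have h3 : ((⌈c i * Mr i⌉₊ : ℕ) : ℝ) < c i * Mr i + 1 :=
            Nat.ceil_lt_add_one (by nlinarith [hca_pos i, (hac i).1, hMr_pos i])
          have h4 : a i * Mr i - 1 < (⌊a i * Mr i⌋₊ : ℝ) := by
            have := Nat.lt_floor_add_one (a i * Mr i)
            linarith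
          nlinarith
        · nlinarith [hca_pos i, hMr_pos i]
      have hlo : (c i - a i) * Mr i - 2 ≤ ((Sm i).card : ℝ) := by
        rw [hSm, Nat.card_Ico]
        refine le_trans ?_ (cast_sub_ge _ _)
        have h1 : c i * Mr i - 1 < (⌊c i * Mr i⌋₊ : ℝ) := by
          have := Nat.lt_floor_add_one (c i * Mr i)
          linarith
        have h2 : (⌈a i * Mr i⌉₊ : ℝ) < a i * Mr i + 1 :=
          Nat.ceil_lt_add_one (by nlinarith [(hac i).1, hMr_pos i])
        nlinarith
      have h5 : ((Sp i).card : ℝ) / Mr i - ((Sm i).card : ℝ) / Mr i ≤ 4 / Mr i := by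
        rw [div_sub_div_same, div_le_div_iff₀ (hMr_pos i) (hMr_pos i)]
        nlinarith [hMr_pos i]
      refine le_trans h5 ?_
      apply div_le_div_of_nonneg_left (by norm_num) (by positivity) (hMr_ge i)
    calc ∑ i, (((Sp i).card : ℝ) / Mr i - ((Sm i).card : ℝ) / Mr i)
        ≤ ∑ _i : Fin s, (4:ℝ) / 2 ^ k := Finset.sum_le_sum hterm
      _ = (s:ℝ) * (4 / 2 ^ k) := by
          rw [Finset.sum_const, nsmul_eq_mul, Finset.card_univ, Fintype.card_fin]

private lemma halton_ud {s : ℕ} (b : Fin s → ℕ) (hb : ∀ i, 2 ≤ b i)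
    (hcop : ∀ i j, i ≠ j → Nat.Coprime (b i) (b j))
    (a c : Fin s → ℝ) (hac : ∀ i, 0 ≤ a i ∧ a i < c i ∧ c i ≤ 1) :
    Tendsto (fun N : ℕ =>
        (((Finset.range N).filter
          (fun n => ∀ i, vdc (b i) n ∈ Set.Ico (a i) (c i))).card : ℝ) / N)
      atTop (nhds (∏ i, (c i - a i))) := by
  rw [Metric.tendsto_atTop]
  intro ε hε
  obtain ⟨k, hk⟩ : ∃ k : ℕ, ((s:ℝ) * 4) / (ε / 4) < 2 ^ k :=
    pow_unbounded_of_one_lt _ one_lt_two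
  have hk2 : (s:ℝ) * (4 / 2 ^ k) < ε / 4 := by
    have h2k : (0:ℝ) < 2 ^ k := by positivity
    rw [div_lt_iff₀ (by linarith : (0:ℝ) < ε / 4)] at hk
    rw [mul_div_assoc'] at *
    rw [div_lt_iff₀ h2k]
    linarith
  obtain ⟨L, U, g, h, hg, hh, hsand, hLV, hVU, hUL⟩ := bracket b hb hcop a c hac k
  rw [Metric.tendsto_atTop] at hg hh
  obtain ⟨N₁, hN₁⟩ := hg (ε/4) (by linarith)
  obtain ⟨N₂, hN₂⟩ := hh (ε/4) (by linarith)
  refine ⟨max N₁ N₂, fun N hN => ?_⟩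
  have hg1 := hN₁ N (le_trans (le_max_left _ _) hN)
  have hh1 := hN₂ N (le_trans (le_max_right _ _) hN)
  rw [Real.dist_eq, abs_lt] at hg1 hh1 ⊢
  obtain ⟨hs1, hs2⟩ := hsand N
  constructor
  · -- -(ε) < F N - V
    have : g N > L - ε/4 := by linarith [hg1.1]
    have hUL' : U - L ≤ ε/4 := le_trans hUL (le_of_lt hk2)
    -- F N ≥ g N > L - ε/4 ≥ V - (U - L) - ε/4 ≥ V - ε/2
    have hVle : ∏ i, (c i - a i) ≤ U := hVU
    linarith
  · have : h N < U + ε/4 := by linarith [hh1.2]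
    have hUL' : U - L ≤ ε/4 := le_trans hUL (le_of_lt hk2)
    linarith

private lemma vdc_lt_inv_iff {b : ℕ} (hb : 2 ≤ b) (n : ℕ) :
    vdc b n ∈ Set.Ico (0:ℝ) ((b:ℝ))⁻¹ ↔ n % b = 0 := by
  have h := vdc_mem_iff hb 1 n 0
  have h1 : ((0:ℕ):ℝ) / (b:ℝ)^1 = 0 := by simp
  have h2 : (((0:ℕ):ℝ) + 1) / (b:ℝ)^1 = ((b:ℝ))⁻¹ := by
    rw [pow_one]; simp [one_div]
  rw [h1, h2] at h
  rw [h]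
  show rdig b 1 n = 0 ↔ n % b = 0
  simp [rdig]

/-- The Halton sequence in bases `b₁, …, b_s` is uniformly distributed modulo 1 if and
only if the bases are pairwise coprime. -/
theorem halton_ud_iff_pairwise_coprime (s : ℕ) (hs : 1 ≤ s) (b : Fin s → ℕ)
    (hb : ∀ i, 2 ≤ b i) :
    (∀ a c : Fin s → ℝ, (∀ i, 0 ≤ a i ∧ a i < c i ∧ c i ≤ 1) →
        Tendsto (fun N : ℕ =>
            (((Finset.range N).filter
              (fun n => ∀ i, vdc (b i) n ∈ Set.Ico (a i) (c i))).card : ℝ) / N)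
          atTop (nhds (∏ i, (c i - a i))))
      ↔ ∀ i j, i ≠ j → Nat.Coprime (b i) (b j) := by
  constructor
  · intro H i j hij
    classical
    set a : Fin s → ℝ := fun _ => 0 with ha
    set c : Fin s → ℝ := fun l =>
      if l = i then ((b i : ℝ))⁻¹ else if l = j then ((b j : ℝ))⁻¹ else 1 with hc
    have hbi : (0:ℝ) < b i := by have := hb i; exact_mod_cast (by omega : 0 < b i)
    have hbj : (0:ℝ) < b j := by have := hb j; exact_mod_cast (by omega : 0 < b j)
    have hbi1 : ((b i : ℝ))⁻¹ ≤ 1 := by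
      rw [inv_le_one_iff₀]; right; exact_mod_cast le_trans (by norm_num) (hb i)
    have hbj1 : ((b j : ℝ))⁻¹ ≤ 1 := by
      rw [inv_le_one_iff₀]; right; exact_mod_cast le_trans (by norm_num) (hb j)
    have hac : ∀ l, 0 ≤ a l ∧ a l < c l ∧ c l ≤ 1 := by
      intro l
      refine ⟨le_refl 0, ?_, ?_⟩
      · simp only [hc]
        by_cases h1 : l = i
        · rw [if_pos h1]; positivity
        · rw [if_neg h1]
          by_cases h2 : l = j
          · rw [if_pos h2]; positivity
          · rw [if_neg h2]; norm_num
      · simp only [hc]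
        by_cases h1 : l = i
        · rw [if_pos h1]; exact hbi1
        · rw [if_neg h1]
          by_cases h2 : l = j
          · rw [if_pos h2]; exact hbj1
          · rw [if_neg h2]
    have h1 := H a c hac
    set L : ℕ := Nat.lcm (b i) (b j) with hLdef
    have hbi0 : b i ≠ 0 := by have := hb i; omega
    have hbj0 : b j ≠ 0 := by have := hb j; omega
    have hL0 : 0 < L := Nat.pos_of_ne_zero (Nat.lcm_ne_zero hbi0 hbj0)
    have hprod : ∏ l, (c l - a l) = ((b i : ℝ))⁻¹ * ((b j : ℝ))⁻¹ := by
      have hca : ∀ l, c l - a l = c l := fun l => by simp only [ha]; ring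
      simp only [hca]
      rw [← Finset.prod_subset (Finset.subset_univ ({i, j} : Finset (Fin s)))
        (fun x _ hx => by
          simp only [Finset.mem_insert, Finset.mem_singleton, not_or] at hx
          simp only [hc]
          rw [if_neg hx.1, if_neg hx.2])]
      rw [Finset.prod_pair hij]
      simp only [hc]
      simp [Ne.symm hij]
    have hpred : ∀ n, (∀ l, vdc (b l) n ∈ Set.Ico (a l) (c l)) ↔ n % L = 0 := by
      intro n
      constructor
      · intro hn
        rw [← Nat.dvd_iff_mod_eq_zero, hLdef, Nat.lcm_dvd_iff]
        have hi := hn i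
        have hj := hn j
        simp only [ha, hc, if_pos rfl] at hi
        simp only [ha, hc, if_neg (Ne.symm hij), if_pos rfl] at hj
        constructor
        · exact Nat.dvd_iff_mod_eq_zero.2 ((vdc_lt_inv_iff (hb i) n).1 hi)
        · exact Nat.dvd_iff_mod_eq_zero.2 ((vdc_lt_inv_iff (hb j) n).1 hj)
      · intro hn l
        have hdvd : L ∣ n := Nat.dvd_iff_mod_eq_zero.2 hn
        simp only [ha, hc]
        by_cases h1 : l = i
        · subst h1
          rw [if_pos rfl]
          exact (vdc_lt_inv_iff (hb l) n).2
            (Nat.dvd_iff_mod_eq_zero.1 (dvd_trans (Nat.dvd_lcm_left _ _) hdvd))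
        · rw [if_neg h1]
          by_cases h2 : l = j
          · subst h2
            rw [if_pos rfl]
            exact (vdc_lt_inv_iff (hb l) n).2
              (Nat.dvd_iff_mod_eq_zero.1 (dvd_trans (Nat.dvd_lcm_right _ _) hdvd))
          · rw [if_neg h2]
            exact ⟨vdc_nonneg _ _, vdc_lt_one (hb l) _⟩
    have h2 : Tendsto (fun N : ℕ =>
        (((Finset.range N).filter
          (fun n => ∀ l, vdc (b l) n ∈ Set.Ico (a l) (c l))).card : ℝ) / N)
        atTop (nhds (1 / L)) := by
      have h3 := tendsto_count_mod hL0 (R := 0) hL0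
      have heq : ∀ N : ℕ, ((Finset.range N).filter
          (fun n => ∀ l, vdc (b l) n ∈ Set.Ico (a l) (c l))).card
          = ((Finset.range N).filter (fun n => n % L = 0)).card := by
        intro N
        congr 1
        apply Finset.filter_congr
        intro n _
        simp only [hpred n]
      simp only [heq]
      exact h3
    have huniq := tendsto_nhds_unique h1 h2
    rw [hprod] at huniq
    have hLcast : (L : ℝ) = (b i : ℝ) * (b j : ℝ) := by
      have hL0' : (0:ℝ) < L := by exact_mod_cast hL0
      have hne : (L:ℝ) ≠ 0 := ne_of_gt hL0'
      field_simp at huniq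
      linarith
    have hLnat : L = b i * b j := by exact_mod_cast hLcast
    have hgl := Nat.gcd_mul_lcm (b i) (b j)
    rw [← hLdef, hLnat] at hgl
    have : Nat.gcd (b i) (b j) * (b i * b j) = 1 * (b i * b j) := by omega
    exact Nat.eq_of_mul_eq_mul_right (by positivity) this
  · intro hcop a c hac
    exact halton_ud b hb hcop a c hac
end

section
/- The two-dimensional sequence (Y₂(n), Y₂(n+1))_{n≥0} of consecutive pairs of the binary van der Corput sequence is not uniformly distributed modulo 1 in [0,1)²; in particular, every point (Y_b(n), Y_b(n+1)) lies on the union of line segments y = x − 1 + 1/b^k + 1/b^{k+1} for x ∈ [1 − 1/b^k, 1 − 1/b^{k+1}], k ∈ ℕ₀ (stated here for general base b). -/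
open scoped Classical
open Filter

private lemma vdc_geom_aux {b : ℕ} (hb : 2 ≤ b) (k : ℕ) :
    ∑ j ∈ Finset.range k, ((b : ℝ) - 1) / (b : ℝ) ^ (j + 1) = 1 - 1 / (b : ℝ) ^ k := by
  have hb0 : (b : ℝ) ≠ 0 := by
    have : (2:ℝ) ≤ (b:ℝ) := by exact_mod_cast hb
    linarith
  induction k with
  | zero => simp
  | succ k ih =>
    rw [Finset.sum_range_succ, ih]
    have h1 : (b:ℝ) ^ k ≠ 0 := pow_ne_zero _ hb0
    have h2 : (b:ℝ) ^ (k+1) ≠ 0 := pow_ne_zero _ hb0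
    field_simp
    ring

private lemma vdc_segment {b : ℕ} (hb : 2 ≤ b) (n : ℕ) : ∃ k : ℕ,
    vdc b n ∈ Set.Icc (1 - 1 / (b : ℝ) ^ k) (1 - 1 / (b : ℝ) ^ (k + 1)) ∧
    vdc b (n + 1) = vdc b n - 1 + 1 / (b : ℝ) ^ k + 1 / (b : ℝ) ^ (k + 1) := by
  have hbp : 0 < b := by omega
  have hpow : ∀ j, 0 < b ^ j := fun j => pow_pos hbp j
  have hbR : (2:ℝ) ≤ (b:ℝ) := by exact_mod_cast hb
  have hbR0 : (0:ℝ) < (b:ℝ) := by linarith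
  -- existence of k
  have h2b : ∀ m : ℕ, 2 ^ m ≤ b ^ m := fun m => Nat.pow_le_pow_left hb m
  have hex : ∃ m : ℕ, n % b ^ (m + 1) ≠ b ^ (m + 1) - 1 := by
    refine ⟨n, ?_⟩
    have h1 : n < 2 ^ n := Nat.lt_two_pow_self (n := n)
    have h2 : 2 ^ (n+1) ≤ b ^ (n+1) := h2b (n+1)
    have h3 : 2 ^ (n+1) = 2 * 2 ^ n := by ring
    have hlt : n < b ^ (n+1) - 1 := by omega
    rw [Nat.mod_eq_of_lt (by omega)]
    omega
  obtain ⟨k, hk, hmin⟩ : ∃ k, (n % b ^ (k + 1) ≠ b ^ (k + 1) - 1) ∧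
      ∀ j < k, n % b ^ (j + 1) = b ^ (j + 1) - 1 := by
    refine ⟨Nat.find hex, Nat.find_spec hex, fun j hj => ?_⟩
    have h := Nat.find_min hex hj
    omega
  clear hex
  have hmodle : ∀ j ≤ k, n % b ^ j = b ^ j - 1 := by
    intro j hj
    cases j with
    | zero => simp [Nat.mod_one]
    | succ i => exact hmin i (by omega)
  have hkn : k ≤ n := by
    have h1 := hmodle k le_rfl
    have h2 : n % b ^ k ≤ n := Nat.mod_le n _
    have h3 : k < 2 ^ k := Nat.lt_two_pow_self (n := k)
    have h4 := h2b k
    omega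
  have hdig : ∀ m j : ℕ, m / b ^ j % b = m % b ^ (j + 1) / b ^ j := by
    intro m j
    rw [pow_succ, ← Nat.mod_mul_right_div_self]
  -- digits of n
  have hdiglt : ∀ j < k, n / b ^ j % b = b - 1 := by
    intro j hj
    rw [hdig, hmin j hj]
    have h5 : b ^ j * (b - 1) + b ^ j = b ^ (j + 1) := by
      have e : b ^ j * (b - 1) + b ^ j = b ^ j * (b - 1 + 1) := by ring
      rw [e, (by omega : b - 1 + 1 = b), ← pow_succ]
    have h1 : b ^ (j+1) - 1 = b ^ j * (b - 1) + (b ^ j - 1) := by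
      have := hpow j; omega
    have hlt : b ^ j - 1 < b ^ j := by have := hpow j; omega
    rw [h1, Nat.mul_add_div (hpow j), Nat.div_eq_of_lt hlt]
    omega
  obtain ⟨d, hddef⟩ : ∃ d, n / b ^ k % b = d := ⟨_, rfl⟩
  have hdb : d < b := hddef ▸ Nat.mod_lt _ hbp
  have hdne : d ≠ b - 1 := by
    intro hcon
    have h1 : n % b ^ (k+1) % b ^ k = n % b ^ k :=
      Nat.mod_mod_of_dvd n (pow_dvd_pow b (by omega))
    have h2 : n % b ^ (k+1) / b ^ k = d := by rw [← hddef]; exact (hdig n k).symm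
    have h3 := Nat.div_add_mod (n % b ^ (k+1)) (b ^ k)
    have h4 := hmodle k le_rfl
    have h5 : b ^ (k+1) = b ^ k * b := pow_succ b k
    have := hpow k
    have hlt : n % b ^ (k+1) < b ^ (k+1) := Nat.mod_lt _ (hpow (k+1))
    apply hk
    have h6 : b ^ k * (b - 1) + b ^ k = b ^ (k + 1) := by
      have e : b ^ k * (b - 1) + b ^ k = b ^ k * (b - 1 + 1) := by ring
      rw [e, (by omega : b - 1 + 1 = b), ← pow_succ]
    rw [h2, hcon] at h3
    have := hpow k
    omega
  -- division facts for n+1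
  have hdivle : ∀ j ≤ k, (n + 1) / b ^ j = n / b ^ j + 1 := by
    intro j hj
    have h1 := Nat.div_add_mod n (b ^ j)
    have h2 := hmodle j hj
    have h3 : n + 1 = b ^ j * (n / b ^ j + 1) := by
      have e : b ^ j * (n / b ^ j + 1) = b ^ j * (n / b ^ j) + b ^ j := by ring
      have := hpow j
      omega
    rw [h3, Nat.mul_div_cancel_left _ (hpow j)]
  have hmodne : ∀ j > k, n % b ^ j ≠ b ^ j - 1 := by
    intro j hj hcon
    apply hk
    have hdvd : b ^ (k+1) ∣ b ^ j := pow_dvd_pow b (by omega)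
    obtain ⟨c, hc⟩ := hdvd
    have hc1 : 1 ≤ c := by
      rcases Nat.eq_zero_or_pos c with h | h
      · exfalso; rw [h, Nat.mul_zero] at hc; have := hpow j; omega
      · exact h
    have h1 : n % b ^ (k+1) = n % b ^ j % b ^ (k+1) :=
      (Nat.mod_mod_of_dvd n ⟨c, hc⟩).symm
    rw [h1, hcon]
    have h2 : b ^ j - 1 = b ^ (k+1) * (c - 1) + (b ^ (k+1) - 1) := by
      have e : b ^ (k+1) * (c - 1) + b ^ (k+1) = b ^ (k+1) * (c - 1 + 1) := by ring
      rw [(by omega : c - 1 + 1 = c)] at e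
      have := hpow (k+1); have := hpow j
      omega
    have hlt : b ^ (k+1) - 1 < b ^ (k+1) := by have := hpow (k+1); omega
    rw [h2, Nat.mul_add_mod, Nat.mod_eq_of_lt hlt]
  have hdivgt : ∀ j > k, (n + 1) / b ^ j = n / b ^ j := by
    intro j hj
    have h1 := Nat.div_add_mod n (b ^ j)
    have h2 := hmodne j hj
    have h3 : n % b ^ j < b ^ j := Nat.mod_lt _ (hpow j)
    have h4 : n + 1 = b ^ j * (n / b ^ j) + (n % b ^ j + 1) := by
      clear * - h1 h2 h3
      generalize hr : n % b ^ j = r at *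
      generalize hq : n / b ^ j = q at *
      generalize hp : b ^ j = p at *
      omega
    have hlt : n % b ^ j + 1 < b ^ j := by
      clear * - h1 h2 h3
      generalize hr : n % b ^ j = r at *
      generalize hq : n / b ^ j = q at *
      generalize hp : b ^ j = p at *
      omega
    rw [h4, Nat.mul_add_div (hpow j), Nat.div_eq_of_lt hlt, Nat.add_zero]
  -- digits of n+1
  have hdig1lt : ∀ j < k, (n + 1) / b ^ j % b = 0 := by
    intro j hj
    rw [hdivle j (le_of_lt hj)]
    have h1 := hdiglt j hj
    have h2 := Nat.div_add_mod (n / b ^ j) b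
    have h3 : n / b ^ j + 1 = b * (n / b ^ j / b + 1) := by
      rw [h1] at h2
      have e : b * (n / b ^ j / b + 1) = b * (n / b ^ j / b) + b := by ring
      clear * - h2 e hbp
      generalize hX : b * (n / b ^ j / b) = X at *
      generalize hY : b * (n / b ^ j / b + 1) = Y at *
      generalize hr : n / b ^ j = r at *
      omega
    rw [h3, Nat.mul_mod_right]
  have hdig1k : (n + 1) / b ^ k % b = d + 1 := by
    rw [hdivle k le_rfl]
    have h2 := Nat.div_add_mod (n / b ^ k) b
    have h3 : n / b ^ k + 1 = (d + 1) + b * (n / b ^ k / b) := by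
      rw [hddef] at h2
      clear * - h2 hdb hdne
      generalize hX : b * (n / b ^ k / b) = X at *
      generalize hr : n / b ^ k = r at *
      omega
    rw [h3, Nat.add_mul_mod_self_left, Nat.mod_eq_of_lt (by omega)]
  have hdig1gt : ∀ j > k, (n + 1) / b ^ j % b = n / b ^ j % b := by
    intro j hj; rw [hdivgt j hj]
  -- top digit of n+1 vanishes
  have htop : (n + 1) / b ^ (n + 1) % b = 0 := by
    have h1 : n < 2 ^ n := Nat.lt_two_pow_self (n := n)
    have h2 := h2b (n+1)
    have h3 : 2 ^ (n+1) = 2 * 2 ^ n := by ring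
    rw [Nat.div_eq_of_lt (by omega), Nat.zero_mod]
  -- vdc of n+1 as sum over range (n+1)
  have hv1 : vdc b (n + 1) =
      ∑ j ∈ Finset.range (n + 1), ((n + 1) / b ^ j % b : ℕ) / (b : ℝ) ^ (j + 1) := by
    rw [vdc, Finset.sum_range_succ, htop]
    simp
  refine ⟨k, ⟨?_, ?_⟩, ?_⟩
  · -- lower bound
    rw [← vdc_geom_aux hb k, vdc]
    calc ∑ j ∈ Finset.range k, ((b:ℝ) - 1) / (b:ℝ) ^ (j + 1)
        = ∑ j ∈ Finset.range k, ((n / b ^ j % b : ℕ) : ℝ) / (b : ℝ) ^ (j + 1) := by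
          apply Finset.sum_congr rfl
          intro j hj
          rw [hdiglt j (Finset.mem_range.mp hj)]
          have : ((b - 1 : ℕ) : ℝ) = (b:ℝ) - 1 := by
            push_cast [Nat.cast_sub (by omega : 1 ≤ b)]; ring
          rw [this]
      _ ≤ ∑ j ∈ Finset.range (n + 1), ((n / b ^ j % b : ℕ) : ℝ) / (b : ℝ) ^ (j + 1) := by
          apply Finset.sum_le_sum_of_subset_of_nonneg
          · exact Finset.range_subset_range.mpr (by omega)
          · intro j _ _
            positivity
  · -- upper bound
    have hkey : vdc b n + 1 / (b:ℝ) ^ (k + 1) ≤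
        ∑ j ∈ Finset.range (n + 1), ((b:ℝ) - 1) / (b:ℝ) ^ (j + 1) := by
      have hmem : k ∈ Finset.range (n + 1) := Finset.mem_range.mpr (by omega)
      have hite : (1 : ℝ) / (b:ℝ) ^ (k + 1) =
          ∑ j ∈ Finset.range (n + 1), (if j = k then 1 / (b:ℝ) ^ (k + 1) else 0) := by
        rw [Finset.sum_ite_eq' (Finset.range (n+1)) k (fun _ => 1 / (b:ℝ) ^ (k+1))]
        simp [hmem]
      rw [vdc, hite, ← Finset.sum_add_distrib]
      apply Finset.sum_le_sum
      intro j hj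
      by_cases hjk : j = k
      · subst hjk
        have hd1 : (d : ℝ) + 1 ≤ (b:ℝ) - 1 := by
          have h9 : (d:ℝ) + 1 ≤ ((b - 1 : ℕ) : ℝ) := by exact_mod_cast (by omega : d + 1 ≤ b - 1)
          rw [Nat.cast_sub (by omega : 1 ≤ b)] at h9
          push_cast at h9
          linarith
        rw [hddef, if_pos rfl, ← add_div]
        apply div_le_div_of_nonneg_right ?_ (by positivity)
        · exact hd1
      · simp only [if_neg hjk, add_zero]
        apply div_le_div_of_nonneg_right ?_ (by positivity)
        have : n / b ^ j % b ≤ b - 1 := by have := Nat.mod_lt (n / b ^ j) hbp; omega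
        have h2 : ((n / b ^ j % b : ℕ) : ℝ) ≤ ((b - 1 : ℕ) : ℝ) := by exact_mod_cast this
        rw [Nat.cast_sub (by omega : 1 ≤ b)] at h2
        push_cast at h2
        linarith
    rw [vdc_geom_aux hb (n+1)] at hkey
    have hpos : (0:ℝ) < 1 / (b:ℝ) ^ (n + 1) := by positivity
    linarith
  · -- the functional equation
    have hdiff : vdc b (n + 1) - vdc b n =
        -(1 - 1 / (b:ℝ) ^ k) + 1 / (b:ℝ) ^ (k + 1) := by
      rw [hv1, vdc, ← Finset.sum_sub_distrib]
      have hzero : ∀ j ∈ Finset.range (n + 1), j ∉ Finset.range (k + 1) →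
          ((n + 1) / b ^ j % b : ℕ) / (b:ℝ) ^ (j+1) - ((n / b ^ j % b : ℕ) : ℝ) / (b:ℝ) ^ (j+1) = 0 := by
        intro j _ hj2
        have hkj : k < j := by
          simp only [Finset.mem_range] at hj2; omega
        rw [hdig1gt j hkj]
        ring
      rw [← Finset.sum_subset (Finset.range_subset_range.mpr (by omega : k + 1 ≤ n + 1)) hzero]
      rw [Finset.sum_range_succ, hdig1k]
      have hsum : ∑ j ∈ Finset.range k,
          (((n + 1) / b ^ j % b : ℕ) / (b:ℝ) ^ (j+1) - ((n / b ^ j % b : ℕ) : ℝ) / (b:ℝ) ^ (j+1))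
          = -(1 - 1/(b:ℝ)^k) := by
        rw [← vdc_geom_aux hb k, ← Finset.sum_neg_distrib]
        apply Finset.sum_congr rfl
        intro j hj
        rw [hdig1lt j (Finset.mem_range.mp hj), hdiglt j (Finset.mem_range.mp hj)]
        rw [Nat.cast_sub (by omega : 1 ≤ b)]
        push_cast
        ring
      rw [hsum, hddef]
      push_cast
      ring
    linarith [hdiff]

/-- The sequence of consecutive pairs of the binary van der Corput sequence is not
uniformly distributed in `[0,1)²`; moreover, for any base `b`, every pair
`(Y_b(n), Y_b(n+1))` lies on one of the line segments
`y = x − 1 + 1 / b ^ k + 1 / b ^ (k+1)`, `x ∈ [1 − 1 / b ^ k, 1 − 1 / b ^ (k+1)]`. -/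
theorem vdc_pairs_not_ud_and_on_segments :
    (¬ ∀ a₁ c₁ a₂ c₂ : ℝ, 0 ≤ a₁ → a₁ < c₁ → c₁ ≤ 1 → 0 ≤ a₂ → a₂ < c₂ → c₂ ≤ 1 →
        Tendsto (fun N : ℕ =>
            (((Finset.range N).filter (fun n =>
              vdc 2 n ∈ Set.Ico a₁ c₁ ∧ vdc 2 (n + 1) ∈ Set.Ico a₂ c₂)).card : ℝ) / N)
          atTop (nhds ((c₁ - a₁) * (c₂ - a₂)))) ∧
    ∀ b : ℕ, 2 ≤ b → ∀ n : ℕ, ∃ k : ℕ,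
      vdc b n ∈ Set.Icc (1 - 1 / (b : ℝ) ^ k) (1 - 1 / (b : ℝ) ^ (k + 1)) ∧
      vdc b (n + 1) = vdc b n - 1 + 1 / (b : ℝ) ^ k + 1 / (b : ℝ) ^ (k + 1) := by
  constructor
  · intro h
    have h2 := h 0 (1/2) 0 (1/2) le_rfl (by norm_num) (by norm_num) le_rfl
      (by norm_num) (by norm_num)
    have hempty : ∀ N : ℕ, ((Finset.range N).filter (fun n =>
        vdc 2 n ∈ Set.Ico (0:ℝ) (1/2) ∧ vdc 2 (n + 1) ∈ Set.Ico (0:ℝ) (1/2))).card = 0 := by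
      intro N
      rw [Finset.card_eq_zero, Finset.filter_eq_empty_iff]
      intro n _
      rintro ⟨⟨hx0, hx1⟩, ⟨hy0, hy1⟩⟩
      obtain ⟨k, ⟨hl, hu⟩, heq⟩ := vdc_segment (le_refl 2) n
      have hc : (((2:ℕ)):ℝ) = (2:ℝ) := by norm_num
      rw [hc] at hl hu heq
      have hk0 : k = 0 := by
        by_contra hkne
        have hk1 : 1 ≤ k := Nat.one_le_iff_ne_zero.mpr hkne
        have h21 : (2:ℝ) ≤ 2 ^ k := by
          calc (2:ℝ) = 2 ^ 1 := by norm_num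
            _ ≤ 2 ^ k := by
              apply pow_le_pow_right₀ (by norm_num) hk1
        have hhalf : 1 / (2:ℝ) ^ k ≤ 1 / 2 :=
          one_div_le_one_div_of_le (by norm_num) h21
        linarith
      subst hk0
      norm_num at heq hl
      linarith
    have h0 : Tendsto (fun N : ℕ =>
        (((Finset.range N).filter (fun n =>
          vdc 2 n ∈ Set.Ico (0:ℝ) (1/2) ∧ vdc 2 (n + 1) ∈ Set.Ico (0:ℝ) (1/2))).card : ℝ) / N)
        atTop (nhds 0) := by
      have hfe : (fun N : ℕ =>
          (((Finset.range N).filter (fun n =>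
            vdc 2 n ∈ Set.Ico (0:ℝ) (1/2) ∧ vdc 2 (n + 1) ∈ Set.Ico (0:ℝ) (1/2))).card : ℝ) / N)
          = fun _ : ℕ => (0:ℝ) := by
        funext N
        rw [hempty N]
        simp
      rw [hfe]
      exact tendsto_const_nhds
    have := tendsto_nhds_unique h2 h0
    norm_num at this
  · intro b hb n
    exact vdc_segment hb n
end

section
/- Let T₂ be the binary von Neumann–Kakutani transformation defined by T₂(x) = x − 1 + 1/2^k + 1/2^{k+1} for x ∈ [1 − 1/2^k, 1 − 1/2^{k+1}), k ∈ ℕ₀. Then T₂ preserves Lebesgue measure on [0,1), and the orbit of 0 under T₂ is the binary van der Corput sequence: T₂ⁿ(0) = Y₂(n) for all n ∈ ℕ₀. -/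
open scoped Classical
open MeasureTheory

/-- binary digit j of n -/
def dgt (n j : ℕ) : ℕ := n / 2 ^ j % 2

lemma dgt_lt (n j : ℕ) : dgt n j < 2 := Nat.mod_lt _ (by norm_num)

lemma dgt_eq_zero (n j : ℕ) (h : n < 2 ^ j) : dgt n j = 0 := by
  unfold dgt; rw [Nat.div_eq_of_lt h]

lemma mod_all_ones (n : ℕ) : ∀ k, (∀ j < k, dgt n j = 1) → n % 2 ^ k = 2 ^ k - 1 := by
  intro k
  induction k with
  | zero => simp [Nat.mod_one]
  | succ m ih =>
    intro h
    have h1 : n % (2 ^ m * 2) = n % 2 ^ m + 2 ^ m * (n / 2 ^ m % 2) := Nat.mod_mul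
    have h2 : dgt n m = 1 := h m (Nat.lt_succ_self m)
    have h3 : n % 2 ^ m = 2 ^ m - 1 := ih (fun j hj => h j (hj.trans (Nat.lt_succ_self m)))
    unfold dgt at h2
    rw [h2, mul_one] at h1
    have hpos : (0:ℕ) < 2 ^ m := (Nat.pow_pos (by norm_num) : (0:ℕ) < 2 ^ m)
    rw [pow_succ]
    omega

/-- the trailing-ones structure -/
lemma trailing (n : ℕ) : ∃ k, k ≤ n ∧ dgt n k = 0 ∧ (∀ j < k, dgt n j = 1) ∧
    (∀ j < k, dgt (n+1) j = 0) ∧ dgt (n+1) k = 1 ∧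
    (∀ j, k < j → dgt (n+1) j = dgt n j) := by
  have hex : ∃ j, dgt n j = 0 := ⟨n, dgt_eq_zero n n ((Nat.lt_two_pow_self : n < 2 ^ n))⟩
  set k := Nat.find hex with hk
  have hk0 : dgt n k = 0 := Nat.find_spec hex
  have hk1 : ∀ j < k, dgt n j = 1 := by
    intro j hj
    have := Nat.find_min hex hj
    have := dgt_lt n j
    omega
  have hkn : k ≤ n := Nat.find_min' hex (dgt_eq_zero n n ((Nat.lt_two_pow_self : n < 2 ^ n)))
  have hmod : n % 2 ^ k = 2 ^ k - 1 := mod_all_ones n k hk1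
  set q := n / 2 ^ k with hq
  have hqe : q % 2 = 0 := hk0
  have hpos : (0:ℕ) < 2 ^ k := (Nat.pow_pos (by norm_num) : (0:ℕ) < 2 ^ k)
  have hdm : 2 ^ k * q + n % 2 ^ k = n := Nat.div_add_mod n (2 ^ k)
  have hsucc : n + 1 = (q + 1) * 2 ^ k := by rw [add_mul, one_mul, mul_comm]; omega
  refine ⟨k, hkn, hk0, hk1, ?_, ?_, ?_⟩
  · intro j hj
    unfold dgt
    have h2k : (2:ℕ) ^ (k - j - 1) * 2 * 2 ^ j = 2 ^ k := by
      rw [← pow_succ, ← pow_add]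
      congr 1
      omega
    have he : n + 1 = ((q + 1) * 2 ^ (k - j - 1) * 2) * 2 ^ j := by
      rw [hsucc, ← h2k]; ring
    rw [he, Nat.mul_div_cancel _ ((Nat.pow_pos (by norm_num) : (0:ℕ) < 2 ^ j)), Nat.mul_mod_left]
  · unfold dgt
    rw [hsucc, Nat.mul_div_cancel _ hpos]
    omega
  · intro j hj
    unfold dgt
    have hkj : 2 ^ k * 2 ^ (j - k) = 2 ^ j := by rw [← pow_add]; congr 1; omega
    have h1 : n / 2 ^ j = q / 2 ^ (j - k) := by
      rw [hq, Nat.div_div_eq_div_mul, hkj]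
    have h2 : (n + 1) / 2 ^ j = (q + 1) / 2 ^ (j - k) := by
      rw [← hkj, ← Nat.div_div_eq_div_mul, hsucc, Nat.mul_div_cancel _ hpos]
    rw [h1, h2]
    obtain ⟨m, hm⟩ : ∃ m, j - k = m + 1 := ⟨j - k - 1, by omega⟩
    rw [hm, pow_succ', ← Nat.div_div_eq_div_mul, ← Nat.div_div_eq_div_mul]
    congr 2
    omega

lemma vdc2_eq (n N : ℕ) (h : n + 1 ≤ N) :
    vdc 2 n = ∑ j ∈ Finset.range N, (dgt n j : ℝ) / 2 ^ (j + 1) := by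
  unfold vdc dgt
  push_cast
  refine Finset.sum_subset (Finset.range_subset_range.mpr h) ?_
  intro j hj hnj
  simp only [Finset.mem_range, not_lt] at hj hnj
  have : n < 2 ^ j := lt_of_lt_of_le ((Nat.lt_two_pow_self : n < 2 ^ n)) (Nat.pow_le_pow_right (by norm_num) (by omega))
  rw [Nat.div_eq_of_lt this]
  simp

lemma geom (k : ℕ) : ∑ j ∈ Finset.range k, (1:ℝ) / 2 ^ (j + 1) = 1 - 1 / 2 ^ k := by
  induction k with
  | zero => simp
  | succ m ih =>
    rw [Finset.sum_range_succ, ih, pow_succ]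
    have : (0:ℝ) < 2 ^ m := by positivity
    field_simp
    ring

lemma vdc_step_s18 (n : ℕ) : ∃ k,
    vdc 2 n ∈ Set.Ico (1 - 1 / (2:ℝ) ^ k) (1 - 1 / (2:ℝ) ^ (k + 1)) ∧
    vdc 2 (n + 1) = vdc 2 n - 1 + 1 / (2:ℝ) ^ k + 1 / (2:ℝ) ^ (k + 1) := by
  obtain ⟨k, hkn, hk0, hk1, hs0, hs1, hsg⟩ := trailing n
  set N := n + 2 with hN
  have hkN : k + 1 ≤ N := by omega
  set t := ∑ j ∈ Finset.Ico (k + 1) N, (dgt n j : ℝ) / 2 ^ (j + 1) with ht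
  have hsplit : ∀ m : ℕ, (fun j => ((dgt m j : ℝ) / 2 ^ (j + 1))) = fun j => ((dgt m j : ℝ) / 2 ^ (j + 1)) := fun _ => rfl
  have hA : vdc 2 n = (1 - 1 / 2 ^ k) + t := by
    rw [vdc2_eq n N (by omega), Finset.range_eq_Ico,
      ← Finset.sum_Ico_consecutive _ (Nat.zero_le (k + 1)) hkN, ← Finset.range_eq_Ico]
    have : ∑ j ∈ Finset.range (k + 1), (dgt n j : ℝ) / 2 ^ (j + 1) = 1 - 1 / 2 ^ k := by
      rw [Finset.sum_range_succ, hk0]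
      rw [show ∑ j ∈ Finset.range k, (dgt n j : ℝ) / 2 ^ (j + 1)
          = ∑ j ∈ Finset.range k, (1:ℝ) / 2 ^ (j + 1) from
        Finset.sum_congr rfl (fun j hj => by rw [hk1 j (Finset.mem_range.mp hj)]; norm_num)]
      rw [geom]
      simp
    rw [this]
  have hB : vdc 2 (n + 1) = 1 / 2 ^ (k + 1) + t := by
    rw [vdc2_eq (n + 1) N (by omega), Finset.range_eq_Ico,
      ← Finset.sum_Ico_consecutive _ (Nat.zero_le (k + 1)) hkN, ← Finset.range_eq_Ico]
    have h1 : ∑ j ∈ Finset.range (k + 1), (dgt (n+1) j : ℝ) / 2 ^ (j + 1) = 1 / 2 ^ (k + 1) := by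
      rw [Finset.sum_range_succ, hs1]
      rw [show ∑ j ∈ Finset.range k, (dgt (n+1) j : ℝ) / 2 ^ (j + 1)
          = ∑ j ∈ Finset.range k, (0:ℝ) from
        Finset.sum_congr rfl (fun j hj => by rw [hs0 j (Finset.mem_range.mp hj)]; norm_num)]
      simp
    have h2 : ∑ j ∈ Finset.Ico (k + 1) N, (dgt (n+1) j : ℝ) / 2 ^ (j + 1) = t := by
      refine Finset.sum_congr rfl (fun j hj => ?_)
      rw [hsg j (by have := (Finset.mem_Ico.mp hj).1; omega)]
    rw [h1, h2]
  have ht0 : 0 ≤ t := Finset.sum_nonneg (fun j _ => by positivity)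
  have htu : t < 1 / 2 ^ (k + 1) := by
    have hle : t ≤ ∑ j ∈ Finset.Ico (k + 1) N, (1:ℝ) / 2 ^ (j + 1) := by
      refine Finset.sum_le_sum (fun j _ => ?_)
      have := dgt_lt n j
      have : (dgt n j : ℝ) ≤ 1 := by exact_mod_cast Nat.lt_succ_iff.mp this
      gcongr
    have heq : ∑ j ∈ Finset.Ico (k + 1) N, (1:ℝ) / 2 ^ (j + 1)
        = (1 - 1 / 2 ^ N) - (1 - 1 / 2 ^ (k + 1)) := by
      rw [Finset.sum_Ico_eq_sub _ hkN, geom, geom]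
    have hNpos : (0:ℝ) < 1 / 2 ^ N := by positivity
    linarith
  have hpow : (1:ℝ) / 2 ^ (k + 1) + 1 / 2 ^ (k + 1) = 1 / 2 ^ k := by
    rw [pow_succ]
    have : (0:ℝ) < 2 ^ k := by positivity
    field_simp
    ring
  refine ⟨k, ⟨by linarith, by linarith⟩, by linarith⟩


lemma cover1 (x : ℝ) (hx : x ∈ Set.Ico (0:ℝ) 1) :
    ∃ k : ℕ, x ∈ Set.Ico (1 - 1 / (2:ℝ) ^ k) (1 - 1 / (2:ℝ) ^ (k + 1)) := by
  obtain ⟨hx0, hx1⟩ := hx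
  have hu : 0 < 1 - x := by linarith
  have hex : ∃ m : ℕ, ((1:ℝ)/2) ^ m < 1 - x :=
    exists_pow_lt_of_lt_one hu (by norm_num)
  set m := Nat.find hex with hm
  have hspec : ((1:ℝ)/2) ^ m < 1 - x := Nat.find_spec hex
  have hm0 : m ≠ 0 := by
    intro h
    rw [h] at hspec
    norm_num at hspec
    linarith
  refine ⟨m - 1, ?_, ?_⟩
  · have hmin : ¬ ((1:ℝ)/2) ^ (m - 1) < 1 - x := Nat.find_min hex (by omega)
    push_neg at hmin
    rw [div_pow, one_pow] at hmin
    have : 1 - x ≤ 1 / 2 ^ (m - 1) := hmin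
    linarith
  · have : ((1:ℝ)/2) ^ (m - 1 + 1) < 1 - x := by
      rw [show m - 1 + 1 = m from by omega]; exact hspec
    rw [div_pow, one_pow] at this
    linarith

lemma cover2 (y : ℝ) (hy : y ∈ Set.Ioo (0:ℝ) 1) :
    ∃ k : ℕ, y ∈ Set.Ico (1 / (2:ℝ) ^ (k + 1)) (1 / (2:ℝ) ^ k) := by
  obtain ⟨hy0, hy1⟩ := hy
  have hex : ∃ m : ℕ, ((1:ℝ)/2) ^ m ≤ y := by
    obtain ⟨m, hm⟩ := exists_pow_lt_of_lt_one hy0 (by norm_num : (1:ℝ)/2 < 1)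
    exact ⟨m, hm.le⟩
  set m := Nat.find hex with hm
  have hspec : ((1:ℝ)/2) ^ m ≤ y := Nat.find_spec hex
  have hm0 : m ≠ 0 := by
    intro h
    rw [h] at hspec
    norm_num at hspec
    linarith
  refine ⟨m - 1, ?_, ?_⟩
  · have : ((1:ℝ)/2) ^ (m - 1 + 1) ≤ y := by
      rw [show m - 1 + 1 = m from by omega]; exact hspec
    rw [div_pow, one_pow] at this
    linarith
  · have hmin : ¬ ((1:ℝ)/2) ^ (m - 1) ≤ y := Nat.find_min hex (by omega)
    push_neg at hmin
    rw [div_pow, one_pow] at hmin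
    linarith

lemma measpart (T : ℝ → ℝ)
    (hT : ∀ k : ℕ, ∀ x ∈ Set.Ico (1 - 1 / (2 : ℝ) ^ k) (1 - 1 / (2 : ℝ) ^ (k + 1)),
      T x = x - 1 + 1 / (2 : ℝ) ^ k + 1 / (2 : ℝ) ^ (k + 1)) :
    ∀ s : Set ℝ, s ⊆ Set.Ico (0 : ℝ) 1 → MeasurableSet s →
        volume (T ⁻¹' s ∩ Set.Ico (0 : ℝ) 1) = volume s := by
  intro s hs hms
  have hp : ∀ k : ℕ, (0:ℝ) < 1 / 2 ^ k := fun k => by positivity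
  have hple : ∀ k : ℕ, (1:ℝ) / 2 ^ k ≤ 1 := fun k => by
    rw [div_le_one (by positivity)]
    exact one_le_pow₀ (by norm_num)
  have hmono : ∀ k l : ℕ, k < l → (1:ℝ) / 2 ^ l ≤ 1 / 2 ^ (k + 1) := by
    intro k l hkl
    apply one_div_le_one_div_of_le (by positivity)
    exact pow_le_pow_right₀ (by norm_num) (by omega)
  have hTs : T ⁻¹' s ∩ Set.Ico (0:ℝ) 1
      = ⋃ k : ℕ, ((fun x => x + (1 / (2:ℝ) ^ k + 1 / 2 ^ (k + 1) - 1)) ⁻¹' s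
          ∩ Set.Ico (1 - 1 / (2:ℝ) ^ k) (1 - 1 / 2 ^ (k + 1))) := by
    ext x
    simp only [Set.mem_inter_iff, Set.mem_preimage, Set.mem_iUnion]
    constructor
    · rintro ⟨hTx, hx⟩
      obtain ⟨k, hk⟩ := cover1 x hx
      refine ⟨k, ?_, hk⟩
      rw [show x + (1 / (2:ℝ) ^ k + 1 / 2 ^ (k + 1) - 1) = T x from by rw [hT k x hk]; ring]
      exact hTx
    · rintro ⟨k, hxs, hxI⟩
      constructor
      · rw [show T x = x + (1 / (2:ℝ) ^ k + 1 / 2 ^ (k + 1) - 1) from by rw [hT k x hxI]; ring]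
        exact hxs
      · obtain ⟨h1, h2⟩ := hxI
        have := hp (k + 1)
        have := hple k
        constructor <;> [linarith; linarith]
  rw [hTs]
  have hmeas : ∀ k : ℕ, MeasurableSet ((fun x => x + (1 / (2:ℝ) ^ k + 1 / 2 ^ (k + 1) - 1)) ⁻¹' s
      ∩ Set.Ico (1 - 1 / (2:ℝ) ^ k) (1 - 1 / 2 ^ (k + 1))) := by
    intro k
    exact ((measurable_add_const _) hms).inter measurableSet_Ico
  have hdisj : Pairwise (Function.onFun Disjoint
      (fun k : ℕ => (fun x => x + (1 / (2:ℝ) ^ k + 1 / 2 ^ (k + 1) - 1)) ⁻¹' s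
        ∩ Set.Ico (1 - 1 / (2:ℝ) ^ k) (1 - 1 / 2 ^ (k + 1)))) := by
    intro k l hkl
    refine Set.disjoint_of_subset Set.inter_subset_right Set.inter_subset_right ?_
    rw [Set.Ico_disjoint_Ico]
    rcases hkl.lt_or_gt with h | h
    · have := hmono k l h
      calc min (1 - 1 / (2:ℝ) ^ (k+1)) (1 - 1 / 2 ^ (l+1)) ≤ 1 - 1 / 2 ^ (k+1) := min_le_left _ _
        _ ≤ 1 - 1 / 2 ^ l := by linarith
        _ ≤ max (1 - 1 / (2:ℝ) ^ k) (1 - 1 / 2 ^ l) := le_max_right _ _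
    · have := hmono l k h
      calc min (1 - 1 / (2:ℝ) ^ (k+1)) (1 - 1 / 2 ^ (l+1)) ≤ 1 - 1 / 2 ^ (l+1) := min_le_right _ _
        _ ≤ 1 - 1 / 2 ^ k := by linarith
        _ ≤ max (1 - 1 / (2:ℝ) ^ k) (1 - 1 / 2 ^ l) := le_max_left _ _
  rw [measure_iUnion hdisj hmeas]
  have him : ∀ k : ℕ, (fun x => x + (1 / (2:ℝ) ^ k + 1 / 2 ^ (k + 1) - 1)) ⁻¹' s
      ∩ Set.Ico (1 - 1 / (2:ℝ) ^ k) (1 - 1 / 2 ^ (k + 1))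
      = (fun x => x + (1 / (2:ℝ) ^ k + 1 / 2 ^ (k + 1) - 1)) ⁻¹'
        (s ∩ Set.Ico (1 / (2:ℝ) ^ (k + 1)) (1 / 2 ^ k)) := by
    intro k
    ext x
    simp only [Set.mem_inter_iff, Set.mem_preimage, Set.mem_Ico]
    constructor
    · rintro ⟨h1, h2, h3⟩
      exact ⟨h1, by linarith, by linarith⟩
    · rintro ⟨h1, h2, h3⟩
      exact ⟨h1, by linarith, by linarith⟩
  have hvol : ∀ k : ℕ, volume ((fun x => x + (1 / (2:ℝ) ^ k + 1 / 2 ^ (k + 1) - 1)) ⁻¹' s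
      ∩ Set.Ico (1 - 1 / (2:ℝ) ^ k) (1 - 1 / 2 ^ (k + 1)))
      = volume (s ∩ Set.Ico (1 / (2:ℝ) ^ (k + 1)) (1 / 2 ^ k)) := by
    intro k
    rw [him k]
    exact measure_preimage_add_right volume _ _
  simp only [hvol]
  have hdisj2 : Pairwise (Function.onFun Disjoint
      (fun k : ℕ => s ∩ Set.Ico (1 / (2:ℝ) ^ (k + 1)) (1 / 2 ^ k))) := by
    intro k l hkl
    refine Set.disjoint_of_subset Set.inter_subset_right Set.inter_subset_right ?_
    rw [Set.Ico_disjoint_Ico]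
    rcases hkl.lt_or_gt with h | h
    · have := hmono k l h
      calc min ((1:ℝ) / 2 ^ k) (1 / 2 ^ l) ≤ 1 / 2 ^ l := min_le_right _ _
        _ ≤ 1 / 2 ^ (k + 1) := this
        _ ≤ max ((1:ℝ) / 2 ^ (k+1)) (1 / 2 ^ (l+1)) := le_max_left _ _
    · have := hmono l k h
      calc min ((1:ℝ) / 2 ^ k) (1 / 2 ^ l) ≤ 1 / 2 ^ k := min_le_left _ _
        _ ≤ 1 / 2 ^ (l + 1) := this
        _ ≤ max ((1:ℝ) / 2 ^ (k+1)) (1 / 2 ^ (l+1)) := le_max_right _ _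
  rw [← measure_iUnion hdisj2 (fun k => hms.inter measurableSet_Ico)]
  have hU : ⋃ k : ℕ, (s ∩ Set.Ico (1 / (2:ℝ) ^ (k + 1)) (1 / 2 ^ k)) = s \ {0} := by
    ext x
    simp only [Set.mem_iUnion, Set.mem_inter_iff, Set.mem_Ico, Set.mem_diff,
      Set.mem_singleton_iff]
    constructor
    · rintro ⟨k, hxs, h1, h2⟩
      have := hp (k + 1)
      exact ⟨hxs, by intro h; rw [h] at h1; linarith⟩
    · rintro ⟨hxs, hx0⟩
      have hx := hs hxs
      obtain ⟨h0, h1⟩ := hx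
      obtain ⟨k, hk⟩ := cover2 x ⟨lt_of_le_of_ne h0 (Ne.symm hx0), h1⟩
      exact ⟨k, hxs, hk⟩
  rw [hU, measure_diff_null (by simp : volume ({0} : Set ℝ) = 0)]

/-- The binary von Neumann–Kakutani transformation preserves Lebesgue measure on
`[0,1)`, and the orbit of `0` under it is the binary van der Corput sequence. -/
theorem kakutani_measure_preserving_and_orbit (T : ℝ → ℝ)
    (hT : ∀ k : ℕ, ∀ x ∈ Set.Ico (1 - 1 / (2 : ℝ) ^ k) (1 - 1 / (2 : ℝ) ^ (k + 1)),
      T x = x - 1 + 1 / (2 : ℝ) ^ k + 1 / (2 : ℝ) ^ (k + 1)) :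
    (∀ s : Set ℝ, s ⊆ Set.Ico (0 : ℝ) 1 → MeasurableSet s →
        volume (T ⁻¹' s ∩ Set.Ico (0 : ℝ) 1) = volume s) ∧
    ∀ n : ℕ, T^[n] 0 = vdc 2 n := by
  refine ⟨measpart T hT, ?_⟩
  intro n
  induction n with
  | zero => simp [vdc]
  | succ n ih =>
    rw [Function.iterate_succ_apply', ih]
    obtain ⟨k, hmem, heq⟩ := vdc_step_s18 n
    rw [hT k _ hmem, heq]
end

section
/- Let (k_n)_{n≥0} be a sequence of non-negative integers and Y_b the van der Corput sequence in base b. The sequence (Y_b(k_n))_{n≥0} is uniformly distributed modulo 1 if and only if (k_n) is uniformly distributed modulo b^d for every d ∈ ℕ₀. -/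
open scoped Classical
open Filter

namespace VdcAux

/-- base-`b` digit reversal of length `d`. -/
def grev (b d r : ℕ) : ℕ := ∑ j ∈ Finset.range d, (r / b ^ j % b) * b ^ (d - 1 - j)

lemma digit_mod {b : ℕ} {d j : ℕ} (r : ℕ) (hj : j < d) :
    r % b ^ d / b ^ j % b = r / b ^ j % b := by
  have h : b ^ d = b ^ j * b ^ (d - j) := by rw [← pow_add]; congr 1; omega
  rw [h, Nat.mod_mul_right_div_self, Nat.mod_mod_of_dvd]
  exact dvd_pow_self b (by omega)

lemma grev_low (b d r : ℕ) : grev b (d + 1) r = (r % b) * b ^ d + grev b d (r / b) := by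
  rw [grev, Finset.sum_range_succ', grev, add_comm ((r % b) * b ^ d)]
  congr 1
  · refine Finset.sum_congr rfl fun j hj => ?_
    rw [Nat.div_div_eq_div_mul, ← pow_succ']
    congr 2
    omega
  · simp

lemma grev_high (b d r : ℕ) : grev b (d + 1) r = b * grev b d (r % b ^ d) + r / b ^ d % b := by
  rw [grev, Finset.sum_range_succ, grev, Finset.mul_sum]
  congr 1
  · refine Finset.sum_congr rfl fun j hj => ?_
    rw [digit_mod r (Finset.mem_range.mp hj), mul_left_comm, ← pow_succ']
    congr 2
    have := Finset.mem_range.mp hj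
    omega
  · simp

lemma grev_lt {b : ℕ} (hb : 2 ≤ b) (d r : ℕ) : grev b d r < b ^ d := by
  induction d generalizing r with
  | zero => simp [grev]
  | succ d ih =>
    have h1 : r % b + 1 ≤ b := Nat.mod_lt r (by omega)
    calc grev b (d + 1) r = (r % b) * b ^ d + grev b d (r / b) := grev_low b d r
      _ < (r % b) * b ^ d + b ^ d := by have := ih (r / b); omega
      _ = (r % b + 1) * b ^ d := by ring
      _ ≤ b * b ^ d := Nat.mul_le_mul_right _ h1
      _ = b ^ (d + 1) := (pow_succ' b d).symm

lemma grev_invol {b : ℕ} (hb : 2 ≤ b) (d : ℕ) : ∀ r < b ^ d, grev b d (grev b d r) = r := by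
  induction d with
  | zero =>
    intro r hr
    have : r = 0 := by simpa using hr
    simp [grev, this]
  | succ d ih =>
    intro r hr
    have hb0 : 0 < b := by omega
    have ht : r / b ^ d < b := by
      rw [Nat.div_lt_iff_lt_mul (by positivity), ← pow_succ']; exact hr
    have hmod : r / b ^ d % b = r / b ^ d := Nat.mod_eq_of_lt ht
    rw [grev_high b d r, hmod, grev_low]
    rw [Nat.mul_add_mod, hmod]
    rw [Nat.mul_add_div hb0, Nat.div_eq_of_lt ht, Nat.add_zero]
    rw [ih _ (Nat.mod_lt r (by positivity))]
    exact Nat.div_add_mod' r (b ^ d)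

lemma vdc_eq {b : ℕ} (hb : 2 ≤ b) (n M : ℕ) (hM : n + 1 ≤ M) :
    vdc b n = ∑ j ∈ Finset.range M, ((n / b ^ j % b : ℕ) : ℝ) / (b : ℝ) ^ (j + 1) := by
  rw [vdc]
  refine Finset.sum_subset (Finset.range_subset_range.mpr hM) fun j _ hj => ?_
  have hj' : n + 1 ≤ j := by simpa using hj
  have : n < b ^ j :=
    lt_of_lt_of_le (Nat.lt_two_pow_self (n := n)) (le_trans (Nat.pow_le_pow_right (by omega) (by omega))
      (Nat.pow_le_pow_left hb j))
  rw [Nat.div_eq_of_lt this]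
  simp

lemma geom_tail {b : ℕ} (hb : 2 ≤ b) (d : ℕ) :
    ∀ M, d ≤ M → ∑ j ∈ Finset.Ico d M, ((b : ℝ) - 1) / (b : ℝ) ^ (j + 1)
      = 1 / (b : ℝ) ^ d - 1 / (b : ℝ) ^ M := by
  have hb0 : (b : ℝ) ≠ 0 := by positivity
  refine fun M hM => Nat.le_induction ?_ ?_ M hM
  · simp
  · intro M hM ih
    rw [Finset.sum_Ico_succ_top hM, ih]
    have h1 : (b:ℝ) ^ (M+1) ≠ 0 := by positivity
    field_simp
    ring

lemma vdc_bounds {b : ℕ} (hb : 2 ≤ b) (d n : ℕ) :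
    (grev b d (n % b ^ d) : ℝ) / (b : ℝ) ^ d ≤ vdc b n ∧
      vdc b n < ((grev b d (n % b ^ d) : ℝ) + 1) / (b : ℝ) ^ d := by
  have hbR : (0:ℝ) < b := by positivity
  set M := max (n + 1) d with hMdef
  have hdM : d ≤ M := le_max_right _ _
  have hsplit : vdc b n
      = (∑ j ∈ Finset.range d, ((n / b ^ j % b : ℕ) : ℝ) / (b : ℝ) ^ (j + 1))
        + ∑ j ∈ Finset.Ico d M, ((n / b ^ j % b : ℕ) : ℝ) / (b : ℝ) ^ (j + 1) := by
    rw [vdc_eq hb n M (le_max_left _ _), Finset.range_eq_Ico,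
      ← Finset.sum_Ico_consecutive _ (Nat.zero_le d) hdM, ← Finset.range_eq_Ico]
  have hhead : ∑ j ∈ Finset.range d, ((n / b ^ j % b : ℕ) : ℝ) / (b : ℝ) ^ (j + 1)
      = (grev b d (n % b ^ d) : ℝ) / (b : ℝ) ^ d := by
    rw [grev]
    push_cast
    rw [Finset.sum_div]
    refine Finset.sum_congr rfl fun j hj => ?_
    have hjd : j < d := Finset.mem_range.mp hj
    rw [digit_mod n hjd, div_eq_div_iff (by positivity) (by positivity), mul_assoc, ← pow_add]
    congr 2
    omega
  have htail0 : 0 ≤ ∑ j ∈ Finset.Ico d M, ((n / b ^ j % b : ℕ) : ℝ) / (b : ℝ) ^ (j + 1) :=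
    Finset.sum_nonneg fun j _ => by positivity
  have htail1 : ∑ j ∈ Finset.Ico d M, ((n / b ^ j % b : ℕ) : ℝ) / (b : ℝ) ^ (j + 1)
      ≤ 1 / (b : ℝ) ^ d - 1 / (b : ℝ) ^ M := by
    rw [← geom_tail hb d M hdM]
    refine Finset.sum_le_sum fun j _ => ?_
    have h1 : n / b ^ j % b + 1 ≤ b := Nat.mod_lt _ (by omega)
    have h2 : ((n / b ^ j % b : ℕ) : ℝ) ≤ (b : ℝ) - 1 := by
      have := Nat.cast_le (α := ℝ).mpr h1
      push_cast at this
      linarith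
    gcongr
  have hMpos : (0:ℝ) < 1 / (b : ℝ) ^ M := by positivity
  constructor
  · rw [hsplit, hhead]; linarith
  · rw [hsplit, hhead, add_div]
    linarith

lemma mem_Ico_iff {b : ℕ} (hb : 2 ≤ b) {d j : ℕ} (hj : j < b ^ d) (n : ℕ) :
    vdc b n ∈ Set.Ico ((grev b d j : ℝ) / (b : ℝ) ^ d) (((grev b d j : ℝ) + 1) / (b : ℝ) ^ d)
      ↔ n % b ^ d = j := by
  have hbd : (0:ℝ) < (b:ℝ) ^ d := by positivity
  have hB := vdc_bounds hb d n
  constructor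
  · rintro ⟨h1, h2⟩
    have e1 : ((grev b d (n % b ^ d) : ℕ) : ℝ) / (b:ℝ)^d < ((grev b d j : ℝ) + 1) / (b:ℝ)^d :=
      lt_of_le_of_lt hB.1 h2
    have e2 : ((grev b d j : ℕ) : ℝ) / (b:ℝ)^d < ((grev b d (n % b ^ d) : ℝ) + 1) / (b:ℝ)^d :=
      lt_of_le_of_lt h1 hB.2
    have n1 : grev b d (n % b ^ d) < grev b d j + 1 := by
      have := (div_lt_div_iff_of_pos_right hbd).mp e1
      exact_mod_cast this
    have n2 : grev b d j < grev b d (n % b ^ d) + 1 := by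
      have := (div_lt_div_iff_of_pos_right hbd).mp e2
      exact_mod_cast this
    have : grev b d (n % b ^ d) = grev b d j := by omega
    have h3 := grev_invol hb d (n % b ^ d) (Nat.mod_lt n (by positivity))
    rw [this, grev_invol hb d j hj] at h3
    exact h3.symm
  · rintro rfl
    exact ⟨hB.1, hB.2⟩

lemma grev_filter_card {b : ℕ} (hb : 2 ≤ b) (d : ℕ) (P : ℕ → Prop) [DecidablePred P] :
    ((Finset.range (b ^ d)).filter (fun j => P (grev b d j))).card
      = ((Finset.range (b ^ d)).filter P).card := by
  refine Finset.card_bij' (fun j _ => grev b d j) (fun m _ => grev b d m) ?_ ?_ ?_ ?_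
  · intro j hj
    rw [Finset.mem_filter] at *
    exact ⟨Finset.mem_range.mpr (grev_lt hb d j), hj.2⟩
  · intro m hm
    rw [Finset.mem_filter] at *
    refine ⟨Finset.mem_range.mpr (grev_lt hb d m), ?_⟩
    rw [grev_invol hb d m (Finset.mem_range.mp hm.1)]
    exact hm.2
  · intro j hj
    exact grev_invol hb d j (Finset.mem_range.mp (Finset.mem_filter.mp hj).1)
  · intro m hm
    exact grev_invol hb d m (Finset.mem_range.mp (Finset.mem_filter.mp hm).1)

lemma cast_div_le_cast_div {x y : ℝ} (N : ℕ) (h : x ≤ y) : x / N ≤ y / N := by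
  exact div_le_div_of_nonneg_right h (Nat.cast_nonneg N)

end VdcAux

open VdcAux in
/-- The subsequence `(Y_b(k_n))` of the van der Corput sequence in base `b` is uniformly
distributed modulo 1 iff `(k_n)` is uniformly distributed modulo `b ^ d` for every `d`. -/
theorem vdc_subsequence_ud_iff (b : ℕ) (hb : 2 ≤ b) (k : ℕ → ℕ) :
    (∀ a c : ℝ, 0 ≤ a → a < c → c ≤ 1 →
        Tendsto (fun N : ℕ =>
            (((Finset.range N).filter (fun n => vdc b (k n) ∈ Set.Ico a c)).card : ℝ) / N)
          atTop (nhds (c - a)))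
      ↔ ∀ d : ℕ, ∀ j < b ^ d,
          Tendsto (fun N : ℕ =>
              (((Finset.range N).filter (fun n => k n % b ^ d = j)).card : ℝ) / N)
            atTop (nhds (1 / (b : ℝ) ^ d)) := by
  have hb0 : 0 < b := by omega
  constructor
  · intro h d j hj
    have hbd : (0:ℝ) < (b:ℝ) ^ d := by positivity
    have hG : grev b d j < b ^ d := grev_lt hb d j
    have h1 : (0:ℝ) ≤ (grev b d j : ℝ) / (b:ℝ) ^ d := by positivity
    have h2 : (grev b d j : ℝ) / (b:ℝ) ^ d < ((grev b d j : ℝ) + 1) / (b:ℝ) ^ d :=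
      (div_lt_div_iff_of_pos_right hbd).mpr (lt_add_one _)
    have h3 : ((grev b d j : ℝ) + 1) / (b:ℝ) ^ d ≤ 1 := by
      rw [div_le_one hbd]
      exact_mod_cast Nat.succ_le_of_lt hG
    have key := h _ _ h1 h2 h3
    have hval : ((grev b d j : ℝ) + 1) / (b:ℝ) ^ d - (grev b d j : ℝ) / (b:ℝ) ^ d
        = 1 / (b:ℝ) ^ d := by
      rw [div_sub_div_same]; ring_nf
    rw [hval] at key
    refine key.congr fun N => ?_
    rw [Finset.filter_congr fun n _ => mem_Ico_iff hb hj (k n)]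
  · intro h a c ha hac hc1
    have hbR1 : (1:ℝ) < b := by exact_mod_cast (by omega : 1 < b)
    rw [Metric.tendsto_nhds]
    intro ε hε
    obtain ⟨d, hd⟩ := pow_unbounded_of_one_lt (4 / ε) hbR1
    have hbd : (0:ℝ) < (b:ℝ) ^ d := by positivity
    have hbdn : 0 < b ^ d := Nat.pow_pos hb0
    have h2ε : 2 / (b:ℝ) ^ d < ε / 2 := by
      rw [div_lt_div_iff₀ hbd (by norm_num)]
      have := (div_lt_iff₀ hε).mp hd
      linarith
    set S : Finset ℕ := (Finset.range (b ^ d)).filter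
      (fun j => a ≤ (grev b d j : ℝ) / (b:ℝ) ^ d ∧ ((grev b d j : ℝ) + 1) / (b:ℝ) ^ d ≤ c)
      with hSdef
    set T : Finset ℕ := (Finset.range (b ^ d)).filter
      (fun j => (grev b d j : ℝ) / (b:ℝ) ^ d < c ∧ a < ((grev b d j : ℝ) + 1) / (b:ℝ) ^ d)
      with hTdef
    set A : ℕ → ℕ → Finset ℕ := fun j N => (Finset.range N).filter (fun n => k n % b ^ d = j)
      with hAdef
    -- counting inequalities
    have hlow : ∀ N : ℕ, (∑ j ∈ S, ((A j N).card : ℝ))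
        ≤ (((Finset.range N).filter (fun n => vdc b (k n) ∈ Set.Ico a c)).card : ℝ) := by
      intro N
      have hdisj : ∀ x ∈ S, ∀ y ∈ S, x ≠ y → Disjoint (A x N) (A y N) := by
        intro x _ y _ hxy
        rw [Finset.disjoint_left]
        intro n hnx hny
        rw [hAdef, Finset.mem_filter] at hnx hny
        exact hxy (hnx.2 ▸ hny.2 ▸ rfl)
      rw [← Nat.cast_sum]
      have := Finset.card_biUnion hdisj
      rw [← this]
      have hsub : S.biUnion (fun j => A j N)
          ⊆ (Finset.range N).filter (fun n => vdc b (k n) ∈ Set.Ico a c) := by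
        intro n hn
        obtain ⟨j, hjS, hnA⟩ := Finset.mem_biUnion.mp hn
        rw [hSdef, Finset.mem_filter] at hjS
        rw [hAdef, Finset.mem_filter] at hnA
        rw [Finset.mem_filter]
        refine ⟨hnA.1, ?_⟩
        have hB := vdc_bounds hb d (k n)
        rw [hnA.2] at hB
        exact ⟨le_trans hjS.2.1 hB.1, lt_of_lt_of_le hB.2 hjS.2.2⟩
      exact_mod_cast Finset.card_le_card hsub
    have hup : ∀ N : ℕ,
        (((Finset.range N).filter (fun n => vdc b (k n) ∈ Set.Ico a c)).card : ℝ)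
          ≤ ∑ j ∈ T, ((A j N).card : ℝ) := by
      intro N
      have hsub : (Finset.range N).filter (fun n => vdc b (k n) ∈ Set.Ico a c)
          ⊆ T.biUnion (fun j => A j N) := by
        intro n hn
        rw [Finset.mem_filter] at hn
        obtain ⟨hnN, hmem⟩ := hn
        have hB := vdc_bounds hb d (k n)
        refine Finset.mem_biUnion.mpr ⟨k n % b ^ d, ?_, ?_⟩
        · rw [hTdef, Finset.mem_filter]
          exact ⟨Finset.mem_range.mpr (Nat.mod_lt _ hbdn),
            lt_of_le_of_lt hB.1 hmem.2, lt_of_le_of_lt hmem.1 hB.2⟩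
        · rw [hAdef, Finset.mem_filter]
          exact ⟨Finset.mem_range.mpr (Finset.mem_range.mp hnN), rfl⟩
      rw [← Nat.cast_sum]
      exact_mod_cast le_trans (Finset.card_le_card hsub) (Finset.card_biUnion_le)
    -- limits of the sums
    have hLlim : Tendsto (fun N : ℕ => ∑ j ∈ S, ((A j N).card : ℝ) / N) atTop
        (nhds ((S.card : ℝ) / (b:ℝ) ^ d)) := by
      have := tendsto_finset_sum S
        (fun j hj => h d j (Finset.mem_range.mp (Finset.mem_filter.mp (hSdef ▸ hj)).1))
      simpa [Finset.sum_const, nsmul_eq_mul, mul_one_div, div_eq_mul_inv] using this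
    have hUlim : Tendsto (fun N : ℕ => ∑ j ∈ T, ((A j N).card : ℝ) / N) atTop
        (nhds ((T.card : ℝ) / (b:ℝ) ^ d)) := by
      have := tendsto_finset_sum T
        (fun j hj => h d j (Finset.mem_range.mp (Finset.mem_filter.mp (hTdef ▸ hj)).1))
      simpa [Finset.sum_const, nsmul_eq_mul, mul_one_div, div_eq_mul_inv] using this
    -- cardinality estimates
    have hScard : (c - a) * (b:ℝ) ^ d - 2 ≤ (S.card : ℝ) := by
      have hSc : S.card = ((Finset.range (b ^ d)).filter
          (fun m : ℕ => a ≤ (m : ℝ) / (b:ℝ) ^ d ∧ ((m : ℝ) + 1) / (b:ℝ) ^ d ≤ c)).card := by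
        rw [hSdef]
        exact grev_filter_card hb d
          (fun m : ℕ => a ≤ (m : ℝ) / (b:ℝ) ^ d ∧ ((m : ℝ) + 1) / (b:ℝ) ^ d ≤ c)
      have hsub : Finset.Ico ⌈a * (b:ℝ) ^ d⌉₊ ⌊c * (b:ℝ) ^ d⌋₊ ⊆ (Finset.range (b ^ d)).filter
          (fun m : ℕ => a ≤ (m : ℝ) / (b:ℝ) ^ d ∧ ((m : ℝ) + 1) / (b:ℝ) ^ d ≤ c) := by
        intro m hm
        rw [Finset.mem_Ico] at hm
        have hm1 : a * (b:ℝ) ^ d ≤ m := (Nat.ceil_le).mp hm.1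
        have hm2 : ((m : ℝ) + 1) ≤ c * (b:ℝ) ^ d := by
          have : (m + 1 : ℕ) ≤ ⌊c * (b:ℝ) ^ d⌋₊ := hm.2
          calc ((m:ℝ) + 1) = ((m + 1 : ℕ) : ℝ) := by push_cast; ring
            _ ≤ (⌊c * (b:ℝ) ^ d⌋₊ : ℝ) := by exact_mod_cast this
            _ ≤ c * (b:ℝ) ^ d := Nat.floor_le (by nlinarith)
        rw [Finset.mem_filter, Finset.mem_range]
        refine ⟨?_, (le_div_iff₀ hbd).mpr hm1, (div_le_iff₀ hbd).mpr ?_⟩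
        · have : (m : ℝ) < (b:ℝ) ^ d := by nlinarith
          exact_mod_cast this
        · linarith
      have hcard := Finset.card_le_card hsub
      rw [Nat.card_Ico] at hcard
      rw [hSc]
      have hA1 : (⌈a * (b:ℝ) ^ d⌉₊ : ℝ) < a * (b:ℝ) ^ d + 1 :=
        Nat.ceil_lt_add_one (by positivity)
      have hC1 : c * (b:ℝ) ^ d - 1 < (⌊c * (b:ℝ) ^ d⌋₊ : ℝ) := Nat.sub_one_lt_floor _
      rcases le_or_gt ⌈a * (b:ℝ) ^ d⌉₊ ⌊c * (b:ℝ) ^ d⌋₊ with hle | hlt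
      · have : ((⌊c * (b:ℝ) ^ d⌋₊ - ⌈a * (b:ℝ) ^ d⌉₊ : ℕ) : ℝ)
            = (⌊c * (b:ℝ) ^ d⌋₊ : ℝ) - (⌈a * (b:ℝ) ^ d⌉₊ : ℝ) := by
          exact_mod_cast Nat.cast_sub hle
        have hcc : ((⌊c * (b:ℝ) ^ d⌋₊ - ⌈a * (b:ℝ) ^ d⌉₊ : ℕ) : ℝ) ≤ _ := Nat.cast_le.mpr hcard
        rw [this] at hcc
        linarith
      · have : (⌊c * (b:ℝ) ^ d⌋₊ : ℝ) < (⌈a * (b:ℝ) ^ d⌉₊ : ℝ) := Nat.cast_lt.mpr hlt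
        have hnn : (0:ℝ) ≤ _ := Nat.cast_nonneg (((Finset.range (b ^ d)).filter
          (fun m : ℕ => a ≤ (m : ℝ) / (b:ℝ) ^ d ∧ ((m : ℝ) + 1) / (b:ℝ) ^ d ≤ c)).card)
        linarith
    have hTcard : (T.card : ℝ) ≤ (c - a) * (b:ℝ) ^ d + 2 := by
      have hTc : T.card = ((Finset.range (b ^ d)).filter
          (fun m : ℕ => (m : ℝ) / (b:ℝ) ^ d < c ∧ a < ((m : ℝ) + 1) / (b:ℝ) ^ d)).card := by
        rw [hTdef]
        exact grev_filter_card hb d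
          (fun m : ℕ => (m : ℝ) / (b:ℝ) ^ d < c ∧ a < ((m : ℝ) + 1) / (b:ℝ) ^ d)
      have hsub : (Finset.range (b ^ d)).filter
          (fun m : ℕ => (m : ℝ) / (b:ℝ) ^ d < c ∧ a < ((m : ℝ) + 1) / (b:ℝ) ^ d)
          ⊆ Finset.Ico ⌊a * (b:ℝ) ^ d⌋₊ ⌈c * (b:ℝ) ^ d⌉₊ := by
        intro m hm
        rw [Finset.mem_filter, Finset.mem_range] at hm
        obtain ⟨hmb, hm1, hm2⟩ := hm
        rw [Finset.mem_Ico]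
        constructor
        · have h1 : a * (b:ℝ) ^ d < (m:ℝ) + 1 := (lt_div_iff₀ hbd).mp hm2
          have h2 : (⌊a * (b:ℝ) ^ d⌋₊ : ℝ) < (m:ℝ) + 1 :=
            lt_of_le_of_lt (Nat.floor_le (by positivity)) h1
          have : (⌊a * (b:ℝ) ^ d⌋₊ : ℕ) < m + 1 := by exact_mod_cast h2
          omega
        · exact Nat.lt_ceil.mpr ((div_lt_iff₀ hbd).mp hm1)
      have hcard := Finset.card_le_card hsub
      rw [Nat.card_Ico] at hcard
      rw [hTc]
      have hC1 : (⌈c * (b:ℝ) ^ d⌉₊ : ℝ) < c * (b:ℝ) ^ d + 1 :=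
        Nat.ceil_lt_add_one (by nlinarith)
      have hA1 : a * (b:ℝ) ^ d - 1 < (⌊a * (b:ℝ) ^ d⌋₊ : ℝ) := Nat.sub_one_lt_floor _
      rcases le_or_gt ⌊a * (b:ℝ) ^ d⌋₊ ⌈c * (b:ℝ) ^ d⌉₊ with hle | hlt
      · have h1 : ((⌈c * (b:ℝ) ^ d⌉₊ - ⌊a * (b:ℝ) ^ d⌋₊ : ℕ) : ℝ)
            = (⌈c * (b:ℝ) ^ d⌉₊ : ℝ) - (⌊a * (b:ℝ) ^ d⌋₊ : ℝ) := by
          exact_mod_cast Nat.cast_sub hle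
        have h3 := (Nat.cast_le (α := ℝ)).mpr hcard
        rw [h1] at h3
        linarith
      · have h0 : ⌈c * (b:ℝ) ^ d⌉₊ - ⌊a * (b:ℝ) ^ d⌋₊ = 0 := Nat.sub_eq_zero_of_le hlt.le
        rw [h0, Nat.le_zero] at hcard
        rw [hcard]
        have : (0:ℝ) < (c - a) * (b:ℝ) ^ d := by nlinarith
        simp only [Nat.cast_zero]
        linarith
    -- assemble
    have hε2 : (0:ℝ) < ε / 2 := by linarith
    have hLev := hLlim.eventually (eventually_gt_nhds
      (show (S.card : ℝ) / (b:ℝ) ^ d - ε / 2 < (S.card : ℝ) / (b:ℝ) ^ d by linarith))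
    have hUev := hUlim.eventually (eventually_lt_nhds
      (show (T.card : ℝ) / (b:ℝ) ^ d < (T.card : ℝ) / (b:ℝ) ^ d + ε / 2 by linarith))
    filter_upwards [hLev, hUev] with N h1 h2
    rw [Real.dist_eq, abs_lt]
    set f : ℝ := (((Finset.range N).filter (fun n => vdc b (k n) ∈ Set.Ico a c)).card : ℝ) / N
      with hfdef
    have hfl : ∑ j ∈ S, ((A j N).card : ℝ) / N ≤ f := by
      rw [hfdef, ← Finset.sum_div]
      exact cast_div_le_cast_div N (hlow N)
    have hfu : f ≤ ∑ j ∈ T, ((A j N).card : ℝ) / N := by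
      rw [hfdef, ← Finset.sum_div]
      exact cast_div_le_cast_div N (hup N)
    have k3 : (c - a) - 2 / (b:ℝ) ^ d ≤ (S.card : ℝ) / (b:ℝ) ^ d := by
      calc (c - a) - 2 / (b:ℝ) ^ d = ((c - a) * (b:ℝ) ^ d - 2) / (b:ℝ) ^ d := by
            field_simp
        _ ≤ (S.card : ℝ) / (b:ℝ) ^ d := by gcongr
    have k4 : (T.card : ℝ) / (b:ℝ) ^ d ≤ (c - a) + 2 / (b:ℝ) ^ d := by
      calc (T.card : ℝ) / (b:ℝ) ^ d ≤ ((c - a) * (b:ℝ) ^ d + 2) / (b:ℝ) ^ d := by gcongr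
        _ = (c - a) + 2 / (b:ℝ) ^ d := by field_simp
    constructor
    · linarith
    · linarith
end
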